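/- arXiv:2309.14276 — 7 statements merged into one kernel-verified Lean document; each statement's English description precedes it below -/
import Mathlib

section
/- Let p ≥ 3, let α ∈ (0,1), and let n₁ ≥ n₂ ≥ … ≥ n_p ≥ 1 be integers. Suppose there exist σ₂,…,σ_p ∈ {-1,0,1} such that n₁ + Σ_{i=2}^{p} σᵢ nᵢ = 0. Then Σ_{i=2}^{p} nᵢ^α − n₁^α ≥ (2 − 2^α) · Σ_{i=3}^{p} nᵢ^α. -/
open Finset

/-- Key concavity lemma: for `0 ≤ b ≤ a`, `(a+b)^α + b^α ≤ a^α + (2b)^α`. -/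
lemma key_rpow (α : ℝ) (hα0 : 0 < α) (hα1 : α < 1) {a b : ℝ} (hb : 0 ≤ b) (hba : b ≤ a) :
    (a + b) ^ α + b ^ α ≤ a ^ α + (2 * b) ^ α := by
  rcases eq_or_lt_of_le hb with rfl | hb0
  · simp
  have ha : 0 < a := lt_of_lt_of_le hb0 hba
  have hconc := Real.concaveOn_rpow hα0.le hα1.le
  set l : ℝ := b / a with hl
  have hl0 : 0 ≤ l := by positivity
  have hl1 : l ≤ 1 := by rw [hl, div_le_one ha]; exact hba
  have hla : l * a = b := by rw [hl]; field_simp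
  have e1 : l * (a + b) + (1 - l) * b = 2 * b := by linear_combination hla
  have e2 : (1 - l) * (a + b) + l * b = a := by linear_combination -hla
  have h1 : l * ((a + b) ^ α) + (1 - l) * (b ^ α) ≤ (2 * b) ^ α := by
    have := hconc.2 (x := a + b) (y := b) (Set.mem_Ici.2 (by linarith))
      (Set.mem_Ici.2 hb0.le) hl0 (sub_nonneg.2 hl1) (by ring)
    simpa [smul_eq_mul, e1] using this
  have h2 : (1 - l) * ((a + b) ^ α) + l * (b ^ α) ≤ a ^ α := by
    have := hconc.2 (x := a + b) (y := b) (Set.mem_Ici.2 (by linarith))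
      (Set.mem_Ici.2 hb0.le) (sub_nonneg.2 hl1) hl0 (by linarith)
    simpa [smul_eq_mul, e2] using this
  linarith

/-- Staircase lemma: if every `b i` on `s` is in `[0, a]`, then
`(a + ∑ b i)^α ≤ a^α + (2^α - 1) * ∑ (b i)^α`. -/
lemma staircase (α : ℝ) (hα0 : 0 < α) (hα1 : α < 1) (s : Finset ℕ) (b : ℕ → ℝ) :
    ∀ a : ℝ, 0 ≤ a → (∀ i ∈ s, 0 ≤ b i ∧ b i ≤ a) →
      (a + ∑ i ∈ s, b i) ^ α ≤ a ^ α + ((2:ℝ) ^ α - 1) * ∑ i ∈ s, (b i) ^ α := by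
  induction s using Finset.induction_on with
  | empty => intro a ha _; simp
  | @insert i s his ih =>
    intro a ha hbs
    have hbi := hbs i (mem_insert_self i s)
    rw [Finset.sum_insert his, Finset.sum_insert his]
    have ih' := ih (a + b i) (by linarith [hbi.1])
      (fun j hj => ⟨(hbs j (mem_insert_of_mem hj)).1,
        le_trans (hbs j (mem_insert_of_mem hj)).2 (by linarith [hbi.1])⟩)
    have hkey : (a + b i) ^ α ≤ a ^ α + ((2:ℝ) ^ α - 1) * (b i) ^ α := by
      have h := key_rpow α hα0 hα1 hbi.1 hbi.2
      have h2b : (2 * b i) ^ α = 2 ^ α * (b i) ^ α :=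
        Real.mul_rpow (by norm_num) hbi.1
      nlinarith [h]
    calc (a + (b i + ∑ j ∈ s, b j)) ^ α
        = ((a + b i) + ∑ j ∈ s, b j) ^ α := by ring_nf
      _ ≤ (a + b i) ^ α + ((2:ℝ) ^ α - 1) * ∑ j ∈ s, (b j) ^ α := ih'
      _ ≤ a ^ α + ((2:ℝ) ^ α - 1) * (b i) ^ α
            + ((2:ℝ) ^ α - 1) * ∑ j ∈ s, (b j) ^ α := by linarith
      _ = a ^ α + ((2:ℝ) ^ α - 1) * ((b i) ^ α + ∑ j ∈ s, (b j) ^ α) := by ring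

/-- Bourgain's staircase inequality for sums of α-powers. -/
theorem bourgain_staircase (p : ℕ) (hp : 3 ≤ p) (α : ℝ) (hα0 : 0 < α) (hα1 : α < 1)
    (n : ℕ → ℕ) (hmono : ∀ i j, 1 ≤ i → i ≤ j → j ≤ p → n j ≤ n i) (hlast : 1 ≤ n p)
    (σ : ℕ → ℤ) (hσ : ∀ i, 2 ≤ i → i ≤ p → σ i = -1 ∨ σ i = 0 ∨ σ i = 1)
    (hsum : (n 1 : ℤ) + ∑ i ∈ Finset.Icc 2 p, σ i * (n i : ℤ) = 0) :
    (2 - (2 : ℝ) ^ α) * ∑ i ∈ Finset.Icc 3 p, (n i : ℝ) ^ α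
      ≤ (∑ i ∈ Finset.Icc 2 p, (n i : ℝ) ^ α) - (n 1 : ℝ) ^ α := by
  have hsplit : ∀ f : ℕ → ℝ, ∑ i ∈ Finset.Icc 2 p, f i = f 2 + ∑ i ∈ Finset.Icc 3 p, f i := by
    intro f
    rw [show Finset.Icc 3 p = Finset.Ioc 2 p from Finset.Icc_add_one_left_eq_Ioc 2 p,
      ← Finset.Ioc_insert_left (by omega : 2 ≤ p), Finset.sum_insert (by simp)]
  -- Step 1: n 1 ≤ ∑_{i=2}^p n i
  have hle : (n 1 : ℝ) ≤ ∑ i ∈ Finset.Icc 2 p, (n i : ℝ) := by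
    have h : (n 1 : ℤ) ≤ ∑ i ∈ Finset.Icc 2 p, (n i : ℤ) := by
      have h1 : ∑ i ∈ Finset.Icc 2 p, (-(σ i)) * (n i : ℤ)
          = -∑ i ∈ Finset.Icc 2 p, σ i * (n i : ℤ) := by
        rw [← Finset.sum_neg_distrib]
        exact Finset.sum_congr rfl fun i _ => by ring
      have h2 : ∑ i ∈ Finset.Icc 2 p, (-(σ i)) * (n i : ℤ)
          ≤ ∑ i ∈ Finset.Icc 2 p, (n i : ℤ) := by
        apply Finset.sum_le_sum
        intro i hi
        simp only [Finset.mem_Icc] at hi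
        have hn : (0:ℤ) ≤ (n i : ℤ) := Int.natCast_nonneg _
        rcases hσ i hi.1 hi.2 with h | h | h <;> rw [h] <;> norm_num <;> linarith
      linarith
    exact_mod_cast h
  -- Step 2: staircase bound
  have hst := staircase α hα0 hα1 (Finset.Icc 3 p) (fun i => (n i : ℝ)) (n 2 : ℝ)
    (by positivity)
    (fun i hi => by
      simp only [Finset.mem_Icc] at hi
      exact ⟨by positivity, Nat.cast_le.mpr (hmono 2 i (by omega) (by omega) hi.2)⟩)
  have hle2 : (n 1 : ℝ) ≤ (n 2 : ℝ) + ∑ i ∈ Finset.Icc 3 p, (n i : ℝ) := by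
    rw [← hsplit (fun i => (n i : ℝ))]; exact hle
  have hmon : (n 1 : ℝ) ^ α ≤ ((n 2 : ℝ) + ∑ i ∈ Finset.Icc 3 p, (n i : ℝ)) ^ α :=
    Real.rpow_le_rpow (by positivity) hle2 hα0.le
  rw [hsplit (fun i => (n i : ℝ) ^ α)]
  linarith
end

section
/- Let p̂ ≥ 3 and p ≥ p̂ be integers, let n₁ ≥ n₂ ≥ … ≥ n_{p̂} ≥ 1 be integers, and let σ₁,…,σ_{p̂} ∈ {−1,+1} be signs such that σ₁ = σ₂ whenever n₁ = n₂. If |Σ_{i=1}^{p̂} σᵢ nᵢ²| ≤ p, then n₁ ≤ 3·Σ_{i=3}^{p̂} nᵢ² + p − p̂. -/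
/-- Bourgain's lemma on almost-cancelling signed sums of squares. -/
theorem bourgain_squares (phat p : ℕ) (h3 : 3 ≤ phat) (hpp : phat ≤ p)
    (n : ℕ → ℕ) (hmono : ∀ i j, 1 ≤ i → i ≤ j → j ≤ phat → n j ≤ n i) (hlast : 1 ≤ n phat)
    (σ : ℕ → ℤ) (hσ : ∀ i, 1 ≤ i → i ≤ phat → σ i = 1 ∨ σ i = -1)
    (h12 : n 1 = n 2 → σ 1 = σ 2)
    (hsum : |∑ i ∈ Finset.Icc 1 phat, σ i * (n i : ℤ) ^ 2| ≤ (p : ℤ)) :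
    (n 1 : ℤ) ≤ 3 * ∑ i ∈ Finset.Icc 3 phat, (n i : ℤ) ^ 2 + (p : ℤ) - (phat : ℤ) := by
  set T : ℤ := ∑ i ∈ Finset.Icc 3 phat, (n i : ℤ) ^ 2 with hTdef
  have hn1 : 1 ≤ n 1 := le_trans hlast (hmono 1 phat le_rfl (by omega) le_rfl)
  have hn2 : 1 ≤ n 2 := le_trans hlast (hmono 2 phat (by omega) (by omega) le_rfl)
  have hn21 : n 2 ≤ n 1 := hmono 1 2 le_rfl (by omega) (by omega)
  have hni : ∀ i ∈ Finset.Icc 3 phat, (1:ℤ) ≤ (n i : ℤ)^2 := by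
    intro i hi
    simp only [Finset.mem_Icc] at hi
    have : 1 ≤ n i := le_trans hlast (hmono i phat (by omega) hi.2 le_rfl)
    have : (1:ℤ) ≤ (n i : ℤ) := by exact_mod_cast this
    nlinarith
  have hT : (phat : ℤ) - 2 ≤ T := by
    have hcard : (Finset.Icc 3 phat).card = phat - 2 := by
      rw [Nat.card_Icc]; omega
    calc (phat : ℤ) - 2 = ((Finset.Icc 3 phat).card : ℤ) * 1 := by
            rw [hcard]; push_cast; omega
      _ ≤ T := by
            rw [hTdef]
            exact Finset.card_nsmul_le_sum _ _ _ hni |>.trans_eq' (by simp)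
  have hR : |∑ i ∈ Finset.Icc 3 phat, σ i * (n i : ℤ) ^ 2| ≤ T := by
    refine (Finset.abs_sum_le_sum_abs _ _).trans ?_
    rw [hTdef]
    apply Finset.sum_le_sum
    intro i hi
    simp only [Finset.mem_Icc] at hi
    rcases hσ i (by omega) hi.2 with h | h <;> rw [h] <;> simp [abs_sq]
  have hsplit : ∑ i ∈ Finset.Icc 1 phat, σ i * (n i : ℤ) ^ 2
      = σ 1 * (n 1 : ℤ)^2 + σ 2 * (n 2 : ℤ)^2 + ∑ i ∈ Finset.Icc 3 phat, σ i * (n i : ℤ) ^ 2 := by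
    have hset : Finset.Icc 1 phat = insert 1 (insert 2 (Finset.Icc 3 phat)) := by
      ext x; simp only [Finset.mem_Icc, Finset.mem_insert]; omega
    rw [hset, Finset.sum_insert (by simp only [Finset.mem_insert, Finset.mem_Icc]; omega),
      Finset.sum_insert (by simp only [Finset.mem_Icc]; omega)]
    ring
  have hA : |σ 1 * (n 1 : ℤ)^2 + σ 2 * (n 2 : ℤ)^2| ≤ (p : ℤ) + T := by
    have := abs_sub_abs_le_abs_sub (∑ i ∈ Finset.Icc 1 phat, σ i * (n i : ℤ) ^ 2)
      (∑ i ∈ Finset.Icc 3 phat, σ i * (n i : ℤ) ^ 2)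
    calc |σ 1 * (n 1 : ℤ)^2 + σ 2 * (n 2 : ℤ)^2|
        ≤ |∑ i ∈ Finset.Icc 1 phat, σ i * (n i : ℤ) ^ 2|
          + |∑ i ∈ Finset.Icc 3 phat, σ i * (n i : ℤ) ^ 2| := by
          rw [hsplit]
          set A := σ 1 * (n 1 : ℤ)^2 + σ 2 * (n 2 : ℤ)^2
          set R := ∑ i ∈ Finset.Icc 3 phat, σ i * (n i : ℤ) ^ 2
          calc |A| = |(A + R) + (-R)| := by congr 1; ring
            _ ≤ |A + R| + |-R| := abs_add_le _ _
            _ = |A + R| + |R| := by rw [abs_neg]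
      _ ≤ (p : ℤ) + T := add_le_add hsum hR
  have hn1Z : (1:ℤ) ≤ (n 1 : ℤ) := by exact_mod_cast hn1
  have hn2Z : (1:ℤ) ≤ (n 2 : ℤ) := by exact_mod_cast hn2
  have hn21Z : (n 2 : ℤ) ≤ (n 1 : ℤ) := by exact_mod_cast hn21
  have hphat : (3:ℤ) ≤ (phat : ℤ) := by exact_mod_cast h3
  rcases hσ 1 (by omega) (by omega) with h1 | h1 <;>
    rcases hσ 2 (by omega) (by omega) with h2 | h2
  · -- σ1 = 1, σ2 = 1
    rw [h1, h2] at hA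
    have : (n 1 : ℤ)^2 + (n 2 : ℤ)^2 ≤ (p:ℤ) + T := by
      have := le_abs_self (1 * (n 1 : ℤ)^2 + 1 * (n 2 : ℤ)^2)
      linarith
    nlinarith
  · -- σ1 = 1, σ2 = -1
    have hne : n 1 ≠ n 2 := by intro h; have := h12 h; omega
    have hlt : (n 2 : ℤ) + 1 ≤ (n 1 : ℤ) := by
      have : n 2 + 1 ≤ n 1 := by omega
      exact_mod_cast this
    rw [h1, h2] at hA
    have : (n 1 : ℤ)^2 - (n 2 : ℤ)^2 ≤ (p:ℤ) + T := by
      have := le_abs_self (1 * (n 1 : ℤ)^2 + (-1) * (n 2 : ℤ)^2)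
      linarith
    nlinarith [mul_nonneg (by linarith : (0:ℤ) ≤ (n 1 : ℤ) - (n 2 : ℤ) - 1) (by linarith : (0:ℤ) ≤ (n 1 : ℤ) + (n 2 : ℤ))]
  · -- σ1 = -1, σ2 = 1
    have hne : n 1 ≠ n 2 := by intro h; have := h12 h; omega
    have hlt : (n 2 : ℤ) + 1 ≤ (n 1 : ℤ) := by
      have : n 2 + 1 ≤ n 1 := by omega
      exact_mod_cast this
    rw [h1, h2] at hA
    have : (n 1 : ℤ)^2 - (n 2 : ℤ)^2 ≤ (p:ℤ) + T := by
      have := neg_abs_le ((-1) * (n 1 : ℤ)^2 + 1 * (n 2 : ℤ)^2)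
      linarith
    nlinarith [mul_nonneg (by linarith : (0:ℤ) ≤ (n 1 : ℤ) - (n 2 : ℤ) - 1) (by linarith : (0:ℤ) ≤ (n 1 : ℤ) + (n 2 : ℤ))]
  · -- σ1 = -1, σ2 = -1
    rw [h1, h2] at hA
    have : (n 1 : ℤ)^2 + (n 2 : ℤ)^2 ≤ (p:ℤ) + T := by
      have := neg_abs_le ((-1) * (n 1 : ℤ)^2 + (-1) * (n 2 : ℤ)^2)
      linarith
    nlinarith
end

section
/- Let n ≥ 2 and let x = (x₁,…,xₙ) ∈ ℝⁿ be such that for every permutation σ of {1,…,n} and every i ∈ {1,…,n−1} the partial sum x_{σ(1)} + … + x_{σ(i)} is nonzero. Then Σ_{σ ∈ Sₙ} ∏_{i=1}^{n−1} 1/(x_{σ(1)} + … + x_{σ(i)}) = (x₁ + … + xₙ) · ∏_{i=1}^{n} (1/xᵢ). -/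
private def suf (N : ℕ) (x : Fin N → ℝ) (σ : Equiv.Perm (Fin N)) (k : ℕ) : ℝ :=
  ∑ j : Fin N, if N ≤ (j : ℕ) + k then x (σ j) else 0

private lemma suf_top (N : ℕ) (x : Fin N → ℝ) (σ : Equiv.Perm (Fin N)) :
    suf N x σ N = ∑ i, x i := by
  unfold suf
  rw [← Equiv.sum_comp σ x]
  refine Finset.sum_congr rfl fun j _ => ?_
  rw [if_pos (by omega)]

private lemma suf_succ (n : ℕ) (x : Fin (n + 2) → ℝ) (p : Fin (n + 2))
    (τ : Equiv.Perm (Fin (n + 1))) (k : ℕ) (hk : k ≤ n + 1) :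
    suf (n + 2) x (Equiv.Perm.decomposeFin.symm (p, τ)) k
      = suf (n + 1) (fun i => x (Equiv.swap 0 p i.succ)) τ k := by
  unfold suf
  rw [Fin.sum_univ_succ]
  rw [if_neg (by simp only [Fin.val_zero, zero_add]; omega), zero_add]
  refine Finset.sum_congr rfl fun j _ => ?_
  rw [Equiv.Perm.decomposeFin_symm_apply_succ]
  have hc : (n + 2 ≤ (j.succ : ℕ) + k) ↔ (n + 1 ≤ (j : ℕ) + k) := by
    simp only [Fin.val_succ]; omega
  exact if_congr hc rfl rfl

private lemma suf_main (n : ℕ) : ∀ x : Fin (n + 1) → ℝ, (∀ i, x i ≠ 0) →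
    (∀ σ : Equiv.Perm (Fin (n + 1)), ∀ k ∈ Finset.Icc 1 n, suf (n + 1) x σ k ≠ 0) →
    ∑ σ : Equiv.Perm (Fin (n + 1)), ∏ k ∈ Finset.Icc 1 n, (suf (n + 1) x σ k)⁻¹
      = (∑ i, x i) * ∏ i, (x i)⁻¹ := by
  induction n with
  | zero =>
    intro x h0 _
    rw [Finset.Icc_eq_empty (by omega)]
    simp [mul_inv_cancel₀ (h0 0)]
  | succ n ih =>
    intro x h0 hx
    set y : Fin (n + 2) → Fin (n + 1) → ℝ := fun p i => x (Equiv.swap 0 p i.succ) with hy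
    rw [← Equiv.sum_comp (Equiv.Perm.decomposeFin.symm)
        (fun σ => ∏ k ∈ Finset.Icc 1 (n + 1), (suf (n + 2) x σ k)⁻¹)]
    rw [Fintype.sum_prod_type]
    have key : ∀ p : Fin (n + 2), (∑ τ : Equiv.Perm (Fin (n + 1)),
        ∏ k ∈ Finset.Icc 1 (n + 1),
          (suf (n + 2) x (Equiv.Perm.decomposeFin.symm (p, τ)) k)⁻¹)
        = ∏ i, (y p i)⁻¹ := by
      intro p
      have hy0 : ∀ i, y p i ≠ 0 := fun i => h0 _
      have hT : (∑ i, y p i) ≠ 0 := by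
        have h := hx (Equiv.Perm.decomposeFin.symm (p, 1)) (n + 1)
          (Finset.mem_Icc.2 ⟨by omega, le_rfl⟩)
        rwa [suf_succ n x p 1 (n + 1) le_rfl, suf_top] at h
      have hyk : ∀ τ : Equiv.Perm (Fin (n + 1)), ∀ k ∈ Finset.Icc 1 n,
          suf (n + 1) (y p) τ k ≠ 0 := by
        intro τ k hk
        rw [Finset.mem_Icc] at hk
        have h := hx (Equiv.Perm.decomposeFin.symm (p, τ)) k
          (Finset.mem_Icc.2 ⟨hk.1, by omega⟩)
        rwa [suf_succ n x p τ k (by omega)] at h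
      have step : ∀ τ : Equiv.Perm (Fin (n + 1)),
          (∏ k ∈ Finset.Icc 1 (n + 1),
            (suf (n + 2) x (Equiv.Perm.decomposeFin.symm (p, τ)) k)⁻¹)
          = (∏ k ∈ Finset.Icc 1 n, (suf (n + 1) (y p) τ k)⁻¹) * (∑ i, y p i)⁻¹ := by
        intro τ
        rw [Finset.prod_Icc_succ_top (by omega)]
        rw [suf_succ n x p τ (n + 1) le_rfl, suf_top]
        congr 1
        refine Finset.prod_congr rfl fun k hk => ?_
        rw [Finset.mem_Icc] at hk
        rw [suf_succ n x p τ k (by omega)]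
      simp_rw [step]
      rw [← Finset.sum_mul, ih (y p) hy0 hyk]
      rw [mul_comm (∑ i, y p i), mul_assoc, mul_inv_cancel₀ hT, mul_one]
    have prodY : ∀ p : Fin (n + 2), (∏ i, (y p i)⁻¹) = x p * ∏ j, (x j)⁻¹ := by
      intro p
      have h1 : ∏ j : Fin (n + 2), (x (Equiv.swap 0 p j))⁻¹ = ∏ j, (x j)⁻¹ :=
        Equiv.prod_comp (Equiv.swap 0 p) fun j => (x j)⁻¹
      rw [Fin.prod_univ_succ, Equiv.swap_apply_left] at h1
      rw [hy]
      rw [← h1, ← mul_assoc, mul_inv_cancel₀ (h0 p), one_mul]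
    simp_rw [key, prodY]
    rw [← Finset.sum_mul]

private lemma pref_eq_suf (N : ℕ) (x : Fin N → ℝ) (σ : Equiv.Perm (Fin N)) (k : ℕ) :
    (∑ j ∈ Finset.univ.filter (fun j : Fin N => (j : ℕ) < k), x (((σ * Fin.revPerm : Equiv.Perm (Fin N))) j))
      = suf N x σ k := by
  rw [Finset.sum_filter]
  rw [← Equiv.sum_comp (Fin.revPerm : Equiv.Perm (Fin N))
      (fun j => if (j : ℕ) < k then x ((σ * Fin.revPerm : Equiv.Perm (Fin N)) j) else 0)]
  unfold suf
  refine Finset.sum_congr rfl fun j _ => ?_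
  have h2 : (σ * Fin.revPerm : Equiv.Perm (Fin N)) (Fin.revPerm j) = σ j := by
    simp [Fin.rev_rev]
  rw [h2]
  have hc : ((Fin.revPerm j : Fin N) : ℕ) < k ↔ N ≤ (j : ℕ) + k := by
    have := j.isLt
    have hv : ((Fin.revPerm j : Fin N) : ℕ) = N - ((j : ℕ) + 1) := Fin.val_rev j
    omega
  exact if_congr hc rfl rfl

/-- Eliasson's permutation identity. -/
theorem eliasson_identity (n : ℕ) (hn : 2 ≤ n) (x : Fin n → ℝ)
    (hx : ∀ σ : Equiv.Perm (Fin n), ∀ k ∈ Finset.Icc 1 (n - 1),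
      (∑ j ∈ Finset.univ.filter (fun j : Fin n => (j : ℕ) < k), x (σ j)) ≠ 0) :
    ∑ σ : Equiv.Perm (Fin n), ∏ k ∈ Finset.Icc 1 (n - 1),
        (∑ j ∈ Finset.univ.filter (fun j : Fin n => (j : ℕ) < k), x (σ j))⁻¹
      = (∑ i, x i) * ∏ i, (x i)⁻¹ := by
  obtain ⟨m, rfl⟩ : ∃ m, n = m + 1 := ⟨n - 1, by omega⟩
  have hm : 1 ≤ m := by omega
  simp only [Nat.add_sub_cancel] at hx ⊢
  have h0 : ∀ i, x i ≠ 0 := by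
    intro i
    have h := hx (Equiv.swap 0 i) 1 (Finset.mem_Icc.2 ⟨le_rfl, hm⟩)
    have hset : Finset.univ.filter (fun j : Fin (m + 1) => (j : ℕ) < 1) = {0} := by
      ext j
      simp only [Finset.mem_filter, Finset.mem_univ, true_and, Finset.mem_singleton, Fin.ext_iff, Fin.val_zero]
      constructor <;> intro h <;> omega
    rw [hset, Finset.sum_singleton, Equiv.swap_apply_left] at h
    exact h
  have hsuf : ∀ σ : Equiv.Perm (Fin (m + 1)), ∀ k ∈ Finset.Icc 1 m,
      suf (m + 1) x σ k ≠ 0 := by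
    intro σ k hk
    rw [← pref_eq_suf]
    exact hx (σ * Fin.revPerm) k hk
  rw [← Equiv.sum_comp (Equiv.mulRight (Fin.revPerm : Equiv.Perm (Fin (m + 1))))
      (fun σ => ∏ k ∈ Finset.Icc 1 m,
        (∑ j ∈ Finset.univ.filter (fun j : Fin (m + 1) => (j : ℕ) < k), x (σ j))⁻¹)]
  have hterm : ∀ σ : Equiv.Perm (Fin (m + 1)),
      (∏ k ∈ Finset.Icc 1 m,
        (∑ j ∈ Finset.univ.filter (fun j : Fin (m + 1) => (j : ℕ) < k),
          x ((Equiv.mulRight (Fin.revPerm : Equiv.Perm (Fin (m + 1))) σ) j))⁻¹)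
      = ∏ k ∈ Finset.Icc 1 m, (suf (m + 1) x σ k)⁻¹ := by
    intro σ
    refine Finset.prod_congr rfl fun k _ => ?_
    rw [show (Equiv.mulRight (Fin.revPerm : Equiv.Perm (Fin (m + 1))) σ) = σ * Fin.revPerm
      from rfl]
    rw [pref_eq_suf]
  simp_rw [hterm]
  exact suf_main m x h0 hsuf
end

section
/- Let n ≥ 2 and let x = (x₁,…,xₙ) ∈ ℝⁿ with xᵢ ≠ 0 for all i and x₁ + … + xₙ = 0. Call a permutation σ of {1,…,n} allowed if x_{σ(1)} + … + x_{σ(i)} ≠ 0 for every i ∈ {1,…,n−1}. Then Σ over allowed permutations σ of ∏_{i=1}^{n−1} 1/(x_{σ(1)} + … + x_{σ(i)}) equals 0. -/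
open scoped Classical
open Finset

noncomputable section RCproof

namespace RCaux

abbrev KK := LaurentSeries ℝ

def pc : PowerSeries ℝ →+* KK := HahnSeries.ofPowerSeries ℤ ℝ

lemma pc_inj : Function.Injective pc := HahnSeries.ofPowerSeries_injective

def cr : ℝ →+* KK := pc.comp (PowerSeries.C)

def XX : KK := pc PowerSeries.X

lemma XX_ne_zero : XX ≠ 0 := by
  intro h
  have := pc_inj (h.trans (map_zero pc).symm)
  exact PowerSeries.X_ne_zero this

/-- `f` is regular at 0 with value `r`. -/
def Reg (f : KK) (r : ℝ) : Prop :=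
  ∃ g : PowerSeries ℝ, pc g = f ∧ PowerSeries.constantCoeff g = r

lemma Reg.add {f f' r r'} (h : Reg f r) (h' : Reg f' r') : Reg (f + f') (r + r') := by
  obtain ⟨g, hg, hc⟩ := h; obtain ⟨g', hg', hc'⟩ := h'
  exact ⟨g + g', by rw [map_add, hg, hg'], by rw [map_add, hc, hc']⟩

lemma Reg.mul {f f' r r'} (h : Reg f r) (h' : Reg f' r') : Reg (f * f') (r * r') := by
  obtain ⟨g, hg, hc⟩ := h; obtain ⟨g', hg', hc'⟩ := h'
  exact ⟨g * g', by rw [map_mul, hg, hg'], by rw [map_mul, hc, hc']⟩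

lemma Reg.neg {f r} (h : Reg f r) : Reg (-f) (-r) := by
  obtain ⟨g, hg, hc⟩ := h
  exact ⟨-g, by rw [map_neg, hg], by rw [map_neg, hc]⟩

lemma reg_cr (a : ℝ) : Reg (cr a) a :=
  ⟨PowerSeries.C a, rfl, PowerSeries.constantCoeff_C a⟩

lemma reg_pc (g : PowerSeries ℝ) : Reg (pc g) (PowerSeries.constantCoeff g) := ⟨g, rfl, rfl⟩

lemma reg_XX_mul_cr (b : ℝ) : Reg (XX * cr b) 0 :=
  ⟨PowerSeries.X * PowerSeries.C b, by rw [map_mul]; rfl, by simp⟩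

lemma Reg.unique {f r r'} (h : Reg f r) (h' : Reg f r') : r = r' := by
  obtain ⟨g, hg, hc⟩ := h; obtain ⟨g', hg', hc'⟩ := h'
  have : g = g' := pc_inj (hg.trans hg'.symm)
  rw [← hc, this, hc']

lemma Reg.inv {f r} (h : Reg f r) (hr : r ≠ 0) : Reg f⁻¹ r⁻¹ := by
  obtain ⟨g, hg, hc⟩ := h
  have hcg : PowerSeries.constantCoeff g ≠ 0 := by rw [hc]; exact hr
  have hmul : g * g⁻¹ = 1 := PowerSeries.mul_inv_cancel _ hcg
  have : f * pc g⁻¹ = 1 := by rw [← hg, ← map_mul, hmul, map_one]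
  refine ⟨g⁻¹, ?_, ?_⟩
  · exact eq_inv_of_mul_eq_one_right this
  · rw [PowerSeries.constantCoeff_inv, hc]

lemma Reg.sum {ι : Type*} {s : Finset ι} {f : ι → KK} {r : ι → ℝ}
    (h : ∀ i ∈ s, Reg (f i) (r i)) : Reg (∑ i ∈ s, f i) (∑ i ∈ s, r i) := by
  classical
  induction s using Finset.induction_on with
  | empty => exact ⟨0, by simp, by simp⟩
  | insert _ _ hx ih =>
    rw [Finset.sum_insert hx, Finset.sum_insert hx]
    exact (h _ (mem_insert_self _ _)).add (ih fun i hi => h i (mem_insert_of_mem hi))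

lemma Reg.prod {ι : Type*} {s : Finset ι} {f : ι → KK} {r : ι → ℝ}
    (h : ∀ i ∈ s, Reg (f i) (r i)) : Reg (∏ i ∈ s, f i) (∏ i ∈ s, r i) := by
  classical
  induction s using Finset.induction_on with
  | empty => exact ⟨1, map_one _, map_one _⟩
  | insert _ _ hx ih =>
    rw [Finset.prod_insert hx, Finset.prod_insert hx]
    exact (h _ (mem_insert_self _ _)).mul (ih fun i hi => h i (mem_insert_of_mem hi))

lemma reg_zero_dvd {f} (h : Reg f 0) : ∃ g : PowerSeries ℝ, f = XX * pc g := by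
  obtain ⟨g₀, hg, hc⟩ := h
  obtain ⟨h₀, hh⟩ := (PowerSeries.X_dvd_iff).2 hc
  exact ⟨h₀, by rw [← hg, hh, map_mul]; rfl⟩

lemma cr_inv (a : ℝ) : (cr a)⁻¹ = cr a⁻¹ := by
  rw [← map_inv₀ cr]

lemma zker {a b : ℝ} (h : cr a + XX * cr b = 0) : a = 0 ∧ b = 0 := by
  have h1 : pc (PowerSeries.C a + PowerSeries.X * PowerSeries.C b) = pc 0 := by
    rw [map_zero, map_add, map_mul]; exact h
  have h2 : PowerSeries.C a + PowerSeries.X * PowerSeries.C b = 0 := pc_inj h1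
  constructor
  · have := congrArg (PowerSeries.constantCoeff) h2
    simpa using this
  · have := congrArg (fun φ => PowerSeries.coeff 1 φ) h2
    simpa [PowerSeries.coeff_C] using this

/-! ### Partial sums -/

def pS {M : Type*} [AddCommMonoid M] {p : ℕ} (w : Fin p → M) (k : ℕ) : M :=
  ∑ j ∈ Finset.univ.filter (fun j : Fin p => (j : ℕ) < k), w j

lemma filter_lt_eq_map {p k : ℕ} (hk : k ≤ p) :
    Finset.univ.filter (fun j : Fin p => (j : ℕ) < k) =
      (Finset.univ : Finset (Fin k)).map (Fin.castLEEmb hk) := by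
  ext a
  simp only [mem_filter, mem_univ, true_and, mem_map, Fin.castLEEmb]
  constructor
  · intro ha
    exact ⟨⟨(a : ℕ), ha⟩, by ext; simp [Fin.castLE]⟩
  · rintro ⟨b, rfl⟩
    simpa [Fin.castLE] using b.isLt

lemma pS_castLE {M : Type*} [AddCommMonoid M] {p : ℕ} (w : Fin p → M) {k : ℕ} (hk : k ≤ p) :
    pS w k = ∑ j : Fin k, w (Fin.castLE hk j) := by
  rw [pS, filter_lt_eq_map hk, Finset.sum_map]
  rfl

lemma pS_agree {M : Type*} [AddCommMonoid M] {p : ℕ} {w : Fin (p+1) → M} {u : Fin p → M}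
    (h : ∀ l : Fin p, w (Fin.castSucc l) = u l) {k : ℕ} (hk : k ≤ p) :
    pS w k = pS u k := by
  rw [pS_castLE w (le_trans hk (Nat.le_succ p)), pS_castLE u hk]
  refine Finset.sum_congr rfl fun j _ => ?_
  have : Fin.castLE (le_trans hk (Nat.le_succ p)) j = Fin.castSucc (Fin.castLE hk j) := by
    ext; simp [Fin.castLE]
  rw [this, h]

lemma pS_univ {M : Type*} [AddCommMonoid M] {p : ℕ} (w : Fin p → M) {k : ℕ} (hk : p ≤ k) :
    pS w k = ∑ i, w i := by
  rw [pS]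
  congr 1
  rw [Finset.filter_true_of_mem fun j _ => lt_of_lt_of_le j.isLt hk]

lemma pS_linear {p : ℕ} (x v : Fin p → ℝ) (k : ℕ) :
    pS (fun i => cr (x i) + XX * cr (v i)) k = cr (pS x k) + XX * cr (pS v k) := by
  simp only [pS, map_sum, Finset.mul_sum, Finset.sum_add_distrib]

end RCaux
namespace RCaux

/-! ### Decomposition of permutation sums by last element -/

def dperm {p : ℕ} (j : Fin (p+1)) (τ : Equiv.Perm (Fin p)) : Equiv.Perm (Fin (p+1)) :=
  Equiv.Perm.decomposeFin.symm (j, τ * Fin.revPerm) * (Fin.revPerm : Equiv.Perm (Fin (p+1)))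

lemma perm_sum_decomp {p : ℕ} (F : Equiv.Perm (Fin (p+1)) → KK) :
    ∑ σ : Equiv.Perm (Fin (p+1)), F σ = ∑ j : Fin (p+1), ∑ τ : Equiv.Perm (Fin p), F (dperm j τ) := by
  have s1 : ∑ σ : Equiv.Perm (Fin (p+1)), F σ
      = ∑ σ : Equiv.Perm (Fin (p+1)), F (σ * (Fin.revPerm : Equiv.Perm (Fin (p+1)))) :=
    (Fintype.sum_equiv (Equiv.mulRight (Fin.revPerm : Equiv.Perm (Fin (p+1))))
      (fun σ => F (σ * Fin.revPerm)) F (fun σ => rfl)).symm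
  have s2 : ∑ σ : Equiv.Perm (Fin (p+1)), F (σ * (Fin.revPerm : Equiv.Perm (Fin (p+1))))
      = ∑ q : Fin (p+1) × Equiv.Perm (Fin p),
          F (Equiv.Perm.decomposeFin.symm q * (Fin.revPerm : Equiv.Perm (Fin (p+1)))) :=
    Fintype.sum_equiv Equiv.Perm.decomposeFin _ _ (fun σ => by
      rw [Equiv.symm_apply_apply])
  rw [s1, s2, Fintype.sum_prod_type]
  refine Finset.sum_congr rfl fun j _ => ?_
  exact (Fintype.sum_equiv (Equiv.mulRight (Fin.revPerm : Equiv.Perm (Fin p)))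
    (fun τ => F (dperm j τ)) _ (fun τ => rfl)).symm

lemma decomp_apply_castSucc {p : ℕ} (j : Fin (p+1)) (τ : Equiv.Perm (Fin p)) (l : Fin p) :
    dperm j τ (Fin.castSucc l) = Equiv.swap 0 j (Fin.succ (τ l)) := by
  rw [dperm, Equiv.Perm.mul_apply]
  have h1 : (Fin.revPerm : Equiv.Perm (Fin (p+1))) (Fin.castSucc l) = Fin.succ (Fin.rev l) := by
    simp [Fin.rev_castSucc]
  rw [h1, Equiv.Perm.decomposeFin_symm_apply_succ]
  congr 2
  rw [Equiv.Perm.mul_apply]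
  simp

lemma decomp_apply_last {p : ℕ} (j : Fin (p+1)) (τ : Equiv.Perm (Fin p)) :
    dperm j τ (Fin.last p) = j := by
  rw [dperm, Equiv.Perm.mul_apply]
  have h1 : (Fin.revPerm : Equiv.Perm (Fin (p+1))) (Fin.last p) = 0 := by simp
  rw [h1, Equiv.Perm.decomposeFin_symm_apply_zero]

def sidestep {p : ℕ} (j : Fin (p+1)) : Fin p ↪ Fin (p+1) :=
  ⟨fun l => Equiv.swap 0 j (Fin.succ l),
    fun a b hab => Fin.succ_injective _ ((Equiv.swap 0 j).injective hab)⟩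

lemma sidestep_apply {p : ℕ} (j : Fin (p+1)) (l : Fin p) :
    sidestep j l = Equiv.swap 0 j (Fin.succ l) := rfl

lemma sidestep_map_univ {p : ℕ} (j : Fin (p+1)) :
    (Finset.univ : Finset (Fin p)).map (sidestep j) = Finset.univ.erase j := by
  ext a
  simp only [Finset.mem_map, Finset.mem_univ, true_and, Finset.mem_erase, and_true, sidestep_apply,
    Function.Embedding.coeFn_mk]
  constructor
  · rintro ⟨b, rfl⟩
    intro h
    have h2 := congrArg (Equiv.swap 0 j) h
    rw [Equiv.swap_apply_self, Equiv.swap_apply_right] at h2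
    exact Fin.succ_ne_zero b h2
  · intro ha
    refine ⟨(Equiv.swap 0 j a).pred ?_, ?_⟩
    · intro h0
      apply ha
      have h2 := congrArg (Equiv.swap 0 j) h0
      rw [Equiv.swap_apply_self, Equiv.swap_apply_left] at h2
      exact h2
    · rw [Fin.succ_pred, Equiv.swap_apply_self]

lemma w_values {p : ℕ} (y : Fin (p+1) → KK) (j : Fin (p+1)) (τ : Equiv.Perm (Fin p)) :
    ∀ l : Fin p, (y ∘ dperm j τ) (Fin.castSucc l) = ((y ∘ sidestep j) ∘ τ) l := by
  intro l
  simp only [Function.comp_apply, decomp_apply_castSucc, sidestep_apply, Function.Embedding.coeFn_mk]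

lemma erase_prod_inv {p : ℕ} (y : Fin p → KK) (j : Fin p) (hyj : y j ≠ 0) :
    ∏ i ∈ Finset.univ.erase j, (y i)⁻¹ = y j * ∏ i, (y i)⁻¹ := by
  rw [Finset.prod_inv_distrib, Finset.prod_inv_distrib,
    ← Finset.mul_prod_erase Finset.univ y (Finset.mem_univ j), mul_inv, ← mul_assoc,
    mul_inv_cancel₀ hyj, one_mul]

/-! ### The field identities -/

theorem fl : ∀ (p : ℕ) (y : Fin p → KK),
    (∀ s : Finset (Fin p), s.Nonempty → ∑ i ∈ s, y i ≠ 0) →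
    ∑ σ : Equiv.Perm (Fin p), ∏ k ∈ Finset.Icc 1 p, (pS (y ∘ σ) k)⁻¹ = ∏ i, (y i)⁻¹ := by
  intro p
  induction p with
  | zero =>
    intro y _
    simp
  | succ p ih =>
    intro y hy
    rw [perm_sum_decomp]
    have hTne : ∑ i, y i ≠ 0 := hy Finset.univ Finset.univ_nonempty
    have key : ∀ j : Fin (p+1), ∀ τ : Equiv.Perm (Fin p),
        ∏ k ∈ Finset.Icc 1 (p+1), (pS (y ∘ dperm j τ) k)⁻¹
        = (∑ i, y i)⁻¹ * ∏ k ∈ Finset.Icc 1 p, (pS ((y ∘ sidestep j) ∘ τ) k)⁻¹ := by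
      intro j τ
      rw [Finset.prod_Icc_succ_top (Nat.le_add_left 1 p)]
      rw [pS_univ (y ∘ dperm j τ) (le_refl (p+1))]
      rw [show (∑ i, (y ∘ dperm j τ) i) = ∑ i, y i from Equiv.sum_comp (dperm j τ) y]
      rw [mul_comm]
      congr 1
      refine Finset.prod_congr rfl fun k hk => ?_
      rw [pS_agree (w_values y j τ) (by simp only [Finset.mem_Icc] at hk; exact hk.2)]
    calc ∑ j : Fin (p+1), ∑ τ : Equiv.Perm (Fin p),
          ∏ k ∈ Finset.Icc 1 (p+1), (pS (y ∘ dperm j τ) k)⁻¹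
        = ∑ j : Fin (p+1), (∑ i, y i)⁻¹ * (y j * ∏ i, (y i)⁻¹) := by
          refine Finset.sum_congr rfl fun j _ => ?_
          rw [Finset.sum_congr rfl (fun τ _ => key j τ), ← Finset.mul_sum]
          congr 1
          have hz : ∀ s : Finset (Fin p), s.Nonempty → ∑ i ∈ s, (y ∘ sidestep j) i ≠ 0 := by
            intro s hs
            have h1 : ∑ i ∈ s, (y ∘ sidestep j) i = ∑ i ∈ s.map (sidestep j), y i := by
              rw [Finset.sum_map]; rfl
            rw [h1]
            exact hy _ hs.map
          rw [ih (y ∘ sidestep j) hz]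
          have himg : ∏ l, ((y ∘ sidestep j) l)⁻¹ = ∏ i ∈ Finset.univ.erase j, (y i)⁻¹ := by
            rw [← sidestep_map_univ j, Finset.prod_map]
            rfl
          rw [himg]
          have hyj : y j ≠ 0 := by
            have := hy {j} (Finset.singleton_nonempty j)
            simpa using this
          rw [erase_prod_inv y j hyj]
      _ = ∏ i, (y i)⁻¹ := by
          rw [← Finset.mul_sum, ← Finset.sum_mul, inv_mul_cancel_left₀ hTne]

theorem ft (q : ℕ) (y : Fin (q+2) → KK)
    (hy : ∀ s : Finset (Fin (q+2)), s.Nonempty → s ≠ Finset.univ → ∑ i ∈ s, y i ≠ 0)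
    (h0 : ∑ i, y i = 0) :
    ∑ σ : Equiv.Perm (Fin (q+2)), ∏ k ∈ Finset.Icc 1 (q+1), (pS (y ∘ σ) k)⁻¹ = 0 := by
  rw [perm_sum_decomp]
  have key : ∀ j : Fin (q+2), ∀ τ : Equiv.Perm (Fin (q+1)),
      ∏ k ∈ Finset.Icc 1 (q+1), (pS (y ∘ dperm j τ) k)⁻¹
      = ∏ k ∈ Finset.Icc 1 (q+1), (pS ((y ∘ sidestep j) ∘ τ) k)⁻¹ := by
    intro j τ
    refine Finset.prod_congr rfl fun k hk => ?_
    rw [pS_agree (w_values y j τ) (by simp only [Finset.mem_Icc] at hk; exact hk.2)]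
  have hyne : ∀ j : Fin (q+2), y j ≠ 0 := by
    intro j
    have h1 := hy {j} (Finset.singleton_nonempty j) (by
      intro h
      have := congrArg Finset.card h
      simp [Fintype.card_fin] at this)
    simpa using h1
  have inner : ∀ j : Fin (q+2),
      ∑ τ : Equiv.Perm (Fin (q+1)), ∏ k ∈ Finset.Icc 1 (q+1), (pS ((y ∘ sidestep j) ∘ τ) k)⁻¹
      = y j * ∏ i, (y i)⁻¹ := by
    intro j
    have hz : ∀ s : Finset (Fin (q+1)), s.Nonempty → ∑ i ∈ s, (y ∘ sidestep j) i ≠ 0 := by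
      intro s hs
      have h1 : ∑ i ∈ s, (y ∘ sidestep j) i = ∑ i ∈ s.map (sidestep j), y i := by
        rw [Finset.sum_map]; rfl
      rw [h1]
      refine hy _ hs.map ?_
      intro h
      have hc := congrArg Finset.card h
      rw [Finset.card_map, Finset.card_univ, Fintype.card_fin] at hc
      have hle := Finset.card_le_univ s
      rw [Fintype.card_fin] at hle
      omega
    rw [fl (q+1) (y ∘ sidestep j) hz]
    have himg : ∏ l, ((y ∘ sidestep j) l)⁻¹ = ∏ i ∈ Finset.univ.erase j, (y i)⁻¹ := by
      rw [← sidestep_map_univ j, Finset.prod_map]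
      rfl
    rw [himg, erase_prod_inv y j (hyne j)]
  calc ∑ j : Fin (q+2), ∑ τ : Equiv.Perm (Fin (q+1)),
        ∏ k ∈ Finset.Icc 1 (q+1), (pS (y ∘ dperm j τ) k)⁻¹
      = ∑ j : Fin (q+2), y j * ∏ i, (y i)⁻¹ := by
        refine Finset.sum_congr rfl fun j _ => ?_
        rw [Finset.sum_congr rfl (fun τ _ => key j τ), inner j]
    _ = 0 := by rw [← Finset.sum_mul, h0, zero_mul]

end RCaux
namespace RCaux

/-! ### Definitions for the main induction -/

def allowedP {p : ℕ} (x : Fin p → ℝ) (σ : Equiv.Perm (Fin p)) : Prop :=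
  ∀ k ∈ Finset.Icc 1 (p - 1), pS (x ∘ σ) k ≠ 0

def zf {p : ℕ} (x v : Fin p → ℝ) : Fin p → KK := fun i => cr (x i) + XX * cr (v i)

def termK {p : ℕ} (γ : ℝ) (x v : Fin p → ℝ) (σ : Equiv.Perm (Fin p)) : KK :=
  ∏ k ∈ Finset.Icc 1 (p - 1), (XX * cr γ + pS (zf x v ∘ σ) k)⁻¹

def TS (p : ℕ) : Prop := ∀ x : Fin p → ℝ, 2 ≤ p → (∀ i, x i ≠ 0) → ∑ i, x i = 0 →
  ∑ σ ∈ Finset.univ.filter (fun σ => allowedP x σ),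
    ∏ k ∈ Finset.Icc 1 (p - 1), (pS (x ∘ σ) k)⁻¹ = 0

def QS (p : ℕ) : Prop := ∀ (γ : ℝ) (x v : Fin p → ℝ), 2 ≤ p → (∀ i, x i ≠ 0) → ∑ i, x i = 0 →
  (∀ s : Finset (Fin p), s.Nonempty → s ≠ Finset.univ → ∑ i ∈ s, x i = 0 →
    γ + ∑ i ∈ s, v i ≠ 0) →
  Reg (∑ σ : Equiv.Perm (Fin p), termK γ x v σ) 0

lemma reg_term {p : ℕ} (γ : ℝ) (x v : Fin p → ℝ) (σ : Equiv.Perm (Fin p))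
    (h : allowedP x σ) :
    Reg (termK γ x v σ) (∏ k ∈ Finset.Icc 1 (p - 1), (pS (x ∘ σ) k)⁻¹) := by
  apply Reg.prod
  intro k hk
  have hfac : XX * cr γ + pS (zf x v ∘ σ) k
      = cr (pS (x ∘ σ) k) + XX * cr (γ + pS (v ∘ σ) k) := by
    have h1 : pS (zf x v ∘ σ) k = cr (pS (x ∘ σ) k) + XX * cr (pS (v ∘ σ) k) :=
      pS_linear (x ∘ σ) (v ∘ σ) k
    rw [h1, map_add, mul_add]
    ring
  rw [hfac]
  have h2 := (reg_cr (pS (x ∘ σ) k)).add (reg_XX_mul_cr (γ + pS (v ∘ σ) k))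
  rw [add_zero] at h2
  exact h2.inv (h k hk)

/-! ### The splitting of a permutation along a prefix -/

section Phi

variable {p m mc : ℕ} (hpmc : m + mc = p) (I : Finset (Fin p))
  (eI : Fin m ≃ ↥I) (eC : Fin mc ≃ ↥(Iᶜ))

def phiF (τ : Equiv.Perm (Fin m)) (ρ : Equiv.Perm (Fin mc)) : Fin p → Fin p := fun j =>
  if h : (j : ℕ) < m then ((eI (τ ⟨(j : ℕ), h⟩) : ↥I) : Fin p)
  else ((eC (ρ ⟨(j : ℕ) - m, by have := j.isLt; omega⟩) : ↥(Iᶜ)) : Fin p)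

lemma phiF_inj (τ : Equiv.Perm (Fin m)) (ρ : Equiv.Perm (Fin mc)) :
    Function.Injective (phiF hpmc I eI eC τ ρ) := by
  intro a b hab
  unfold phiF at hab
  by_cases ha : (a : ℕ) < m <;> by_cases hb : (b : ℕ) < m
  · rw [dif_pos ha, dif_pos hb] at hab
    have h1 : eI (τ ⟨(a : ℕ), ha⟩) = eI (τ ⟨(b : ℕ), hb⟩) := Subtype.coe_injective hab
    have h2 := τ.injective (eI.injective h1)
    have h3 := congrArg Fin.val h2
    exact Fin.ext h3
  · rw [dif_pos ha, dif_neg hb] at hab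
    exfalso
    have h1 : ((eI (τ ⟨(a : ℕ), ha⟩) : ↥I) : Fin p) ∈ I := (eI (τ ⟨(a : ℕ), ha⟩)).2
    have h2 : ((eI (τ ⟨(a : ℕ), ha⟩) : ↥I) : Fin p) ∈ Iᶜ := by
      rw [hab]; exact (eC _).2
    rw [Finset.mem_compl] at h2
    exact h2 h1
  · rw [dif_neg ha, dif_pos hb] at hab
    exfalso
    have h1 : ((eC (ρ ⟨(a : ℕ) - m, by have := a.isLt; omega⟩) : ↥(Iᶜ)) : Fin p) ∈ Iᶜ :=
      (eC _).2
    have h2 : ((eC (ρ ⟨(a : ℕ) - m, by have := a.isLt; omega⟩) : ↥(Iᶜ)) : Fin p) ∈ I := by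
      rw [hab]; exact (eI _).2
    rw [Finset.mem_compl] at h1
    exact h1 h2
  · rw [dif_neg ha, dif_neg hb] at hab
    have h1 := Subtype.coe_injective hab
    have h2 := ρ.injective (eC.injective h1)
    have h3 : (a : ℕ) - m = (b : ℕ) - m := congrArg Fin.val h2
    exact Fin.ext (by omega)

def phi (τ : Equiv.Perm (Fin m)) (ρ : Equiv.Perm (Fin mc)) : Equiv.Perm (Fin p) :=
  Equiv.ofBijective (phiF hpmc I eI eC τ ρ)
    ((Finite.injective_iff_bijective).1 (phiF_inj hpmc I eI eC τ ρ))

lemma phi_lt (τ : Equiv.Perm (Fin m)) (ρ : Equiv.Perm (Fin mc)) (j : Fin p)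
    (h : (j : ℕ) < m) :
    phi hpmc I eI eC τ ρ j = ((eI (τ ⟨(j : ℕ), h⟩) : ↥I) : Fin p) := by
  show phiF hpmc I eI eC τ ρ j = _
  rw [phiF, dif_pos h]

lemma phi_ge (τ : Equiv.Perm (Fin m)) (ρ : Equiv.Perm (Fin mc)) (j : Fin p)
    (h : ¬ (j : ℕ) < m) (hb : (j : ℕ) - m < mc) :
    phi hpmc I eI eC τ ρ j = ((eC (ρ ⟨(j : ℕ) - m, hb⟩) : ↥(Iᶜ)) : Fin p) := by
  show phiF hpmc I eI eC τ ρ j = _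
  rw [phiF, dif_neg h]

variable {M : Type*} [AddCommMonoid M]

lemma pS_phi_low (u : Fin p → M) (τ : Equiv.Perm (Fin m)) (ρ : Equiv.Perm (Fin mc))
    {k : ℕ} (hk : k ≤ m) :
    pS (u ∘ phi hpmc I eI eC τ ρ) k = pS ((fun l => u ((eI l : ↥I) : Fin p)) ∘ τ) k := by
  have hmp : m ≤ p := by omega
  rw [pS_castLE _ (le_trans hk hmp), pS_castLE _ hk]
  refine Finset.sum_congr rfl fun a _ => ?_
  have hja : ((Fin.castLE (le_trans hk hmp) a : Fin p) : ℕ) < m := lt_of_lt_of_le a.isLt hk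
  rw [Function.comp_apply, phi_lt hpmc I eI eC τ ρ _ hja]
  have he : (⟨((Fin.castLE (le_trans hk hmp) a : Fin p) : ℕ), hja⟩ : Fin m)
      = Fin.castLE hk a := by ext; rfl
  rw [he]
  rfl

lemma sum_phi_block (u : Fin p → M) (τ : Equiv.Perm (Fin m)) (ρ : Equiv.Perm (Fin mc)) :
    pS (u ∘ phi hpmc I eI eC τ ρ) m = ∑ i ∈ I, u i := by
  rw [pS_phi_low hpmc I eI eC u τ ρ le_rfl, pS_univ _ (le_refl m)]
  rw [show (∑ l, ((fun l => u ((eI l : ↥I) : Fin p)) ∘ τ) l)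
      = ∑ l, u ((eI l : ↥I) : Fin p) from Equiv.sum_comp τ (fun l => u ((eI l : ↥I) : Fin p))]
  rw [show (∑ l, u ((eI l : ↥I) : Fin p)) = ∑ c : ↥I, u (c : Fin p)
    from Equiv.sum_comp eI (fun c => u (c : Fin p))]
  exact Finset.sum_coe_sort I u

lemma pS_phi_high (u : Fin p → M) (τ : Equiv.Perm (Fin m)) (ρ : Equiv.Perm (Fin mc))
    {k : ℕ} (hk1 : m ≤ k) (hk2 : k ≤ p) :
    pS (u ∘ phi hpmc I eI eC τ ρ) k
      = (∑ i ∈ I, u i) + pS ((fun l => u ((eC l : ↥(Iᶜ)) : Fin p)) ∘ ρ) (k - m) := by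
  have hk' : k = m + (k - m) := by omega
  rw [pS_castLE _ hk2]
  rw [show (∑ a : Fin k, (u ∘ phi hpmc I eI eC τ ρ) (Fin.castLE hk2 a))
      = ∑ a : Fin (m + (k - m)), (u ∘ phi hpmc I eI eC τ ρ)
          (Fin.castLE hk2 (Fin.cast hk'.symm a)) from
    (Fintype.sum_equiv (finCongr hk') _ _ (fun a => rfl))]
  rw [Fin.sum_univ_add]
  congr 1
  · -- first block
    have h1 : ∀ i : Fin m, (u ∘ phi hpmc I eI eC τ ρ)
        (Fin.castLE hk2 (Fin.cast hk'.symm (Fin.castAdd (k - m) i)))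
        = u ((eI (τ i) : ↥I) : Fin p) := by
      intro i
      have hji : ((Fin.castLE hk2 (Fin.cast hk'.symm (Fin.castAdd (k - m) i)) : Fin p) : ℕ) < m :=
        i.isLt
      rw [Function.comp_apply, phi_lt hpmc I eI eC τ ρ _ hji]
      rfl
    rw [Finset.sum_congr rfl (fun i _ => h1 i)]
    rw [show (∑ i : Fin m, u ((eI (τ i) : ↥I) : Fin p))
        = ∑ l, u ((eI l : ↥I) : Fin p) from Equiv.sum_comp τ (fun l => u ((eI l : ↥I) : Fin p))]
    rw [show (∑ l, u ((eI l : ↥I) : Fin p)) = ∑ c : ↥I, u (c : Fin p)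
      from Equiv.sum_comp eI (fun c => u (c : Fin p))]
    exact Finset.sum_coe_sort I u
  · -- second block
    have hkm : k - m ≤ mc := by omega
    rw [pS_castLE _ hkm]
    refine Finset.sum_congr rfl fun b _ => ?_
    have hjb : ¬ ((Fin.castLE hk2 (Fin.cast hk'.symm (Fin.natAdd m b)) : Fin p) : ℕ) < m := by
      simp [Fin.natAdd]
    have hjb2 : ((Fin.castLE hk2 (Fin.cast hk'.symm (Fin.natAdd m b)) : Fin p) : ℕ) - m < mc := by
      have := b.isLt
      simp [Fin.natAdd]
      omega
    rw [Function.comp_apply, phi_ge hpmc I eI eC τ ρ _ hjb hjb2]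
    have he : (⟨((Fin.castLE hk2 (Fin.cast hk'.symm (Fin.natAdd m b)) : Fin p) : ℕ) - m, hjb2⟩
        : Fin mc) = Fin.castLE hkm b := by
      ext
      simp [Fin.natAdd, Fin.castLE]
    rw [he]
    rfl

end Phi

end RCaux
namespace RCaux

lemma Icc_one_eq_Ioc (n : ℕ) : Finset.Icc 1 n = Finset.Ioc 0 n := by
  ext a
  simp only [Finset.mem_Icc, Finset.mem_Ioc]
  omega

lemma class_reg (p : ℕ) (γ : ℝ) (x v : Fin p → ℝ)
    (hx0 : ∀ i, x i ≠ 0) (hsum : ∑ i, x i = 0)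
    (hbad : ∀ s : Finset (Fin p), s.Nonempty → s ≠ Finset.univ → ∑ i ∈ s, x i = 0 →
      γ + ∑ i ∈ s, v i ≠ 0)
    (IH : ∀ q, q < p → TS q ∧ QS q)
    (I : Finset (Fin p)) (hIne : I.Nonempty) (hInu : I ≠ Finset.univ)
    (hIsum : ∑ i ∈ I, x i = 0) :
    Reg (∑ σ ∈ Finset.univ.filter (fun σ : Equiv.Perm (Fin p) =>
        (∀ j : Fin p, (j : ℕ) < I.card → σ j ∈ I) ∧
        ∀ k ∈ Finset.Icc 1 (I.card - 1), pS (x ∘ σ) k ≠ 0), termK γ x v σ) 0 := by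
  classical
  obtain ⟨m, hm⟩ : ∃ m, I.card = m := ⟨_, rfl⟩
  have hmp' : m ≤ p := by
    have := Finset.card_le_univ I
    rw [Fintype.card_fin, hm] at this
    exact this
  have hm2 : 2 ≤ m := by
    by_contra hcon
    have hm1 : 1 ≤ m := by
      rw [← hm]
      exact Finset.card_pos.mpr hIne
    have : m = 1 := by omega
    rw [this] at hm
    obtain ⟨a, ha⟩ := Finset.card_eq_one.mp hm
    rw [ha, Finset.sum_singleton] at hIsum
    exact hx0 a hIsum
  have hCsum : ∑ i ∈ Iᶜ, x i = 0 := by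
    have := Finset.sum_add_sum_compl I x
    rw [hIsum, hsum, zero_add] at this
    exact this
  have hcc : (Iᶜ : Finset (Fin p)).card = p - m := by
    rw [Finset.card_compl, Fintype.card_fin, hm]
  have hc2 : 2 ≤ p - m := by
    by_contra hcon
    have hCne : (Iᶜ : Finset (Fin p)).Nonempty := by
      rw [Finset.nonempty_iff_ne_empty]
      intro h
      exact hInu ((Finset.compl_eq_empty_iff I).mp h)
    have hc1 : 1 ≤ (Iᶜ : Finset (Fin p)).card := Finset.card_pos.mpr hCne
    have : (Iᶜ : Finset (Fin p)).card = 1 := by omega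
    obtain ⟨a, ha⟩ := Finset.card_eq_one.mp this
    rw [ha, Finset.sum_singleton] at hCsum
    exact hx0 a hCsum
  set mc := p - m with hmc
  have hpmc : m + mc = p := by omega
  have hmlt : m < p := by omega
  have hmclt : mc < p := by omega
  set eI : Fin m ≃ ↥I := (Finset.equivFinOfCardEq hm).symm with heI
  set eC : Fin mc ≃ ↥(Iᶜ) := (Finset.equivFinOfCardEq hcc).symm with heC
  set xI : Fin m → ℝ := fun l => x ((eI l : ↥I) : Fin p) with hxI
  set vI : Fin m → ℝ := fun l => v ((eI l : ↥I) : Fin p) with hvI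
  set xC : Fin mc → ℝ := fun l => x ((eC l : ↥(Iᶜ)) : Fin p) with hxC
  set vC : Fin mc → ℝ := fun l => v ((eC l : ↥(Iᶜ)) : Fin p) with hvC
  set γ' : ℝ := γ + ∑ i ∈ I, v i with hγ'
  -- membership of images
  have himg : ∀ σ : Equiv.Perm (Fin p), (∀ j : Fin p, (j : ℕ) < m → σ j ∈ I) →
      ∀ j : Fin p, ¬ ((j : ℕ) < m) → σ j ∈ Iᶜ := by
    intro σ hσ j hj
    rw [Finset.mem_compl]
    intro hmem
    have himage : (Finset.univ.filter fun j' : Fin p => (j' : ℕ) < m).image σ = I := by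
      apply Finset.eq_of_subset_of_card_le
      · intro a ha
        rw [Finset.mem_image] at ha
        obtain ⟨j', hj', rfl⟩ := ha
        rw [Finset.mem_filter] at hj'
        exact hσ j' hj'.2
      · rw [Finset.card_image_of_injective _ σ.injective, filter_lt_eq_map hmp',
          Finset.card_map, Finset.card_univ, Fintype.card_fin, hm]
    rw [← himage, Finset.mem_image] at hmem
    obtain ⟨j', hj', heq⟩ := hmem
    rw [Finset.mem_filter] at hj'
    have hjj := σ.injective heq
    rw [hjj] at hj'
    exact hj hj'.2
  -- the sum over the class as a sum over pairs
  have hbij : ∑ σ ∈ Finset.univ.filter (fun σ : Equiv.Perm (Fin p) =>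
        (∀ j : Fin p, (j : ℕ) < I.card → σ j ∈ I) ∧
        ∀ k ∈ Finset.Icc 1 (I.card - 1), pS (x ∘ σ) k ≠ 0), termK γ x v σ
      = ∑ pr ∈ (Finset.univ.filter (fun τ : Equiv.Perm (Fin m) => allowedP xI τ)) ×ˢ
          (Finset.univ : Finset (Equiv.Perm (Fin mc))),
          termK γ x v (phi hpmc I eI eC pr.1 pr.2) := by
    refine (Finset.sum_bij (fun pr _ => phi hpmc I eI eC pr.1 pr.2) ?_ ?_ ?_ ?_).symm
    · -- maps into the class
      rintro ⟨τ, ρ⟩ hpr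
      simp only [Finset.mem_product, Finset.mem_filter, Finset.mem_univ, true_and] at hpr
      simp only [Finset.mem_filter, Finset.mem_univ, true_and]
      refine ⟨?_, ?_⟩
      · intro j hj
        rw [hm] at hj
        rw [phi_lt hpmc I eI eC τ ρ j hj]
        exact (eI (τ ⟨(j : ℕ), hj⟩)).2
      · intro k hk
        rw [hm] at hk
        have hkm : k ≤ m := by
          rw [Finset.mem_Icc] at hk
          omega
        have := pS_phi_low hpmc I eI eC x τ ρ hkm
        rw [this]
        exact hpr.1 k hk
    · -- injectivity
      rintro ⟨τ₁, ρ₁⟩ h₁ ⟨τ₂, ρ₂⟩ h₂ heq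
      have hτ : τ₁ = τ₂ := by
        apply Equiv.ext
        intro l
        have hlp : ((Fin.castLE hmp' l : Fin p) : ℕ) < m := l.isLt
        have e1 := congrArg (fun σ : Equiv.Perm (Fin p) => σ (Fin.castLE hmp' l)) heq
        simp only at e1
        rw [phi_lt hpmc I eI eC τ₁ ρ₁ _ hlp, phi_lt hpmc I eI eC τ₂ ρ₂ _ hlp] at e1
        have e2 := eI.injective (Subtype.coe_injective e1)
        have e3 : τ₁ ⟨((Fin.castLE hmp' l : Fin p) : ℕ), hlp⟩ = τ₁ l := rfl
        have e4 : τ₂ ⟨((Fin.castLE hmp' l : Fin p) : ℕ), hlp⟩ = τ₂ l := rfl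
        rw [e3, e4] at e2
        exact e2
      have hρ : ρ₁ = ρ₂ := by
        apply Equiv.ext
        intro b
        have hbp : m + (b : ℕ) < p := by have := b.isLt; omega
        have hge : ¬ (((⟨m + (b : ℕ), hbp⟩ : Fin p) : ℕ) < m) := by
          show ¬ (m + (b : ℕ) < m); omega
        have hsub : ((⟨m + (b : ℕ), hbp⟩ : Fin p) : ℕ) - m < mc := by
          have := b.isLt
          show m + (b : ℕ) - m < mc
          omega
        have e1 := congrArg (fun σ : Equiv.Perm (Fin p) => σ ⟨m + (b : ℕ), hbp⟩) heq
        simp only at e1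
        rw [phi_ge hpmc I eI eC τ₁ ρ₁ _ hge hsub, phi_ge hpmc I eI eC τ₂ ρ₂ _ hge hsub] at e1
        have e2 := eC.injective (Subtype.coe_injective e1)
        have e3 : (⟨((⟨m + (b : ℕ), hbp⟩ : Fin p) : ℕ) - m, hsub⟩ : Fin mc) = b := by
          ext
          show m + (b : ℕ) - m = (b : ℕ)
          omega
        rw [e3] at e2
        exact e2
      rw [Prod.ext_iff]
      exact ⟨hτ, hρ⟩
    · -- surjectivity
      intro σ hσ
      simp only [Finset.mem_filter, Finset.mem_univ, true_and] at hσ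
      rw [hm] at hσ
      obtain ⟨hσ1, hσ2⟩ := hσ
      have hτ0inj : Function.Injective (fun l : Fin m =>
          eI.symm ⟨σ (Fin.castLE hmp' l), hσ1 _ l.isLt⟩) := by
        intro a b hab
        have h1 := congrArg (fun t => ((eI t : ↥I) : Fin p)) hab
        simp only [Equiv.apply_symm_apply] at h1
        have h2 := σ.injective h1
        have h3 := congrArg Fin.val h2
        exact Fin.ext h3
      have hρ0inj : Function.Injective (fun b : Fin mc =>
          eC.symm ⟨σ ⟨m + (b : ℕ), by have := b.isLt; omega⟩,
            himg σ hσ1 _ (by show ¬ (m + (b : ℕ) < m); omega)⟩) := by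
        intro a b hab
        have h1 := congrArg (fun t => ((eC t : ↥(Iᶜ)) : Fin p)) hab
        simp only [Equiv.apply_symm_apply] at h1
        have h2 := σ.injective h1
        have h3 := congrArg Fin.val h2
        have h4 : m + (a : ℕ) = m + (b : ℕ) := h3
        exact Fin.ext (by omega)
      set τ : Equiv.Perm (Fin m) := Equiv.ofBijective _
        ((Finite.injective_iff_bijective).1 hτ0inj) with hτdef
      set ρ : Equiv.Perm (Fin mc) := Equiv.ofBijective _
        ((Finite.injective_iff_bijective).1 hρ0inj) with hρdef
      have hphi : phi hpmc I eI eC τ ρ = σ := by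
        apply Equiv.ext
        intro j
        have hjp := j.isLt
        by_cases hj : (j : ℕ) < m
        · rw [phi_lt hpmc I eI eC τ ρ j hj]
          have h1 : τ ⟨(j : ℕ), hj⟩ = eI.symm ⟨σ j, hσ1 j hj⟩ := rfl
          rw [h1, Equiv.apply_symm_apply]
        · have hsub : (j : ℕ) - m < mc := by omega
          rw [phi_ge hpmc I eI eC τ ρ j hj hsub]
          have h1 : ρ ⟨(j : ℕ) - m, hsub⟩
              = eC.symm ⟨σ ⟨m + ((j : ℕ) - m), by omega⟩,
                  himg σ hσ1 _ (by show ¬ (m + ((j : ℕ) - m) < m); omega)⟩ := rfl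
          rw [h1, Equiv.apply_symm_apply]
          show σ _ = σ j
          congr 1
          ext
          show m + ((j : ℕ) - m) = (j : ℕ)
          omega
      refine ⟨⟨τ, ρ⟩, ?_, hphi⟩
      simp only [Finset.mem_product, Finset.mem_filter, Finset.mem_univ, true_and]
      refine ⟨?_, trivial⟩
      intro k hk
      have hkm : k ≤ m := by
        rw [Finset.mem_Icc] at hk
        omega
      have h1 := pS_phi_low hpmc I eI eC x τ ρ hkm
      rw [hphi] at h1
      rw [← h1]
      exact hσ2 k hk
    · intro pr hpr
      rfl
  rw [hbij]
  -- zero-sum of the z-values on I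
  have hIzsum : ∑ i ∈ I, zf x v i = XX * cr (∑ i ∈ I, v i) := by
    have h1 : ∑ i ∈ I, zf x v i = cr (∑ i ∈ I, x i) + XX * cr (∑ i ∈ I, v i) := by
      simp only [zf, Finset.sum_add_distrib, map_sum, Finset.mul_sum]
    rw [h1, hIsum, map_zero, zero_add]
  have hmidfac : XX * cr γ + ∑ i ∈ I, zf x v i = XX * cr γ' := by
    rw [hIzsum, hγ', map_add, mul_add]
  -- factorization of each term
  have hterm : ∀ (τ : Equiv.Perm (Fin m)) (ρ : Equiv.Perm (Fin mc)),
      termK γ x v (phi hpmc I eI eC τ ρ)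
        = termK γ xI vI τ * ((XX * cr γ')⁻¹ * termK γ' xC vC ρ) := by
    intro τ ρ
    have hP1 : ∏ k ∈ Finset.Ioc 0 (m-1),
        (XX * cr γ + pS (zf x v ∘ phi hpmc I eI eC τ ρ) k)⁻¹ = termK γ xI vI τ := by
      rw [termK, Icc_one_eq_Ioc]
      refine Finset.prod_congr rfl fun k hk => ?_
      rw [Finset.mem_Ioc] at hk
      rw [pS_phi_low hpmc I eI eC (zf x v) τ ρ (by omega : k ≤ m)]
      rfl
    have hP2 : ∏ k ∈ Finset.Ioc m (p-1),
        (XX * cr γ + pS (zf x v ∘ phi hpmc I eI eC τ ρ) k)⁻¹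
          = termK γ' xC vC ρ := by
      have hmap : Finset.Ioc m (p-1) = Finset.map (addLeftEmbedding m) (Finset.Ioc 0 (mc-1)) := by
        rw [Finset.map_add_left_Ioc]
        congr 1 <;> omega
      rw [hmap, Finset.prod_map, termK, Icc_one_eq_Ioc]
      refine Finset.prod_congr rfl fun k hk => ?_
      rw [Finset.mem_Ioc] at hk
      have haem : (addLeftEmbedding m) k = m + k := rfl
      rw [haem]
      rw [pS_phi_high hpmc I eI eC (zf x v) τ ρ (by omega : m ≤ m + k) (by omega : m + k ≤ p)]
      rw [show m + k - m = k from by omega]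
      rw [← add_assoc, hmidfac]
      rfl
    have hGm : (XX * cr γ + pS (zf x v ∘ phi hpmc I eI eC τ ρ) m)⁻¹ = (XX * cr γ')⁻¹ := by
      rw [sum_phi_block hpmc I eI eC (zf x v) τ ρ, hmidfac]
    calc termK γ x v (phi hpmc I eI eC τ ρ)
        = ∏ k ∈ Finset.Ioc 0 (p-1),
            (XX * cr γ + pS (zf x v ∘ phi hpmc I eI eC τ ρ) k)⁻¹ := by
          rw [termK, Icc_one_eq_Ioc]
      _ = (∏ k ∈ Finset.Ioc 0 m, (XX * cr γ + pS (zf x v ∘ phi hpmc I eI eC τ ρ) k)⁻¹)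
            * ∏ k ∈ Finset.Ioc m (p-1),
                (XX * cr γ + pS (zf x v ∘ phi hpmc I eI eC τ ρ) k)⁻¹ :=
          (Finset.prod_Ioc_consecutive _ (Nat.zero_le m) (by omega)).symm
      _ = ((∏ k ∈ Finset.Ioc 0 (m-1), (XX * cr γ + pS (zf x v ∘ phi hpmc I eI eC τ ρ) k)⁻¹)
            * ∏ k ∈ Finset.Ioc (m-1) m, (XX * cr γ + pS (zf x v ∘ phi hpmc I eI eC τ ρ) k)⁻¹)
            * ∏ k ∈ Finset.Ioc m (p-1),
                (XX * cr γ + pS (zf x v ∘ phi hpmc I eI eC τ ρ) k)⁻¹ := by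
          rw [Finset.prod_Ioc_consecutive _ (Nat.zero_le (m-1)) (by omega : m - 1 ≤ m)]
      _ = termK γ xI vI τ * ((XX * cr γ')⁻¹ * termK γ' xC vC ρ) := by
          have hsingle : Finset.Ioc (m-1) m = {m} := by
            ext a
            simp only [Finset.mem_Ioc, Finset.mem_singleton]
            omega
          rw [hP1, hP2, hsingle, Finset.prod_singleton, hGm]
          ring
  -- factor the double sum
  rw [Finset.sum_congr rfl (fun pr hpr => hterm pr.1 pr.2)]
  rw [Finset.sum_product]
  have hfac : ∑ τ ∈ Finset.univ.filter (fun τ : Equiv.Perm (Fin m) => allowedP xI τ),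
      ∑ ρ : Equiv.Perm (Fin mc),
        termK γ xI vI τ * ((XX * cr γ')⁻¹ * termK γ' xC vC ρ)
      = (∑ τ ∈ Finset.univ.filter (fun τ : Equiv.Perm (Fin m) => allowedP xI τ),
          termK γ xI vI τ)
        * ((XX * cr γ')⁻¹ * ∑ ρ : Equiv.Perm (Fin mc), termK γ' xC vC ρ) := by
    rw [Finset.sum_mul]
    refine Finset.sum_congr rfl fun τ _ => ?_
    rw [← Finset.mul_sum, ← Finset.mul_sum]
  rw [hfac]
  -- regularity of the three factors
  have hxIsum : ∑ l, xI l = 0 := by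
    rw [show (∑ l, xI l) = ∑ c : ↥I, x (c : Fin p) from Equiv.sum_comp eI (fun c => x (c : Fin p))]
    rw [Finset.sum_coe_sort I x]
    exact hIsum
  have hxCsum : ∑ l, xC l = 0 := by
    rw [show (∑ l, xC l) = ∑ c : ↥(Iᶜ), x (c : Fin p)
      from Equiv.sum_comp eC (fun c => x (c : Fin p))]
    rw [Finset.sum_coe_sort Iᶜ x]
    exact hCsum
  have hAI : Reg (∑ τ ∈ Finset.univ.filter (fun τ : Equiv.Perm (Fin m) => allowedP xI τ),
      termK γ xI vI τ) 0 := by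
    have h1 := Reg.sum (s := Finset.univ.filter (fun τ : Equiv.Perm (Fin m) => allowedP xI τ))
      (f := fun τ => termK γ xI vI τ)
      (r := fun τ => ∏ k ∈ Finset.Icc 1 (m-1), (pS (xI ∘ τ) k)⁻¹)
      (fun τ hτ => reg_term γ xI vI τ (by
        rw [Finset.mem_filter] at hτ
        exact hτ.2))
    have hTS := (IH m hmlt).1 xI hm2 (fun l => hx0 _) hxIsum
    rw [hTS] at h1
    exact h1
  have hEC : Reg (∑ ρ : Equiv.Perm (Fin mc), termK γ' xC vC ρ) 0 := by
    refine (IH mc hmclt).2 γ' xC vC hc2 (fun l => hx0 _) hxCsum ?_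
    intro s hs hsnu hsx
    have hinj : Function.Injective (fun b : Fin mc => ((eC b : ↥(Iᶜ)) : Fin p)) :=
      fun a b hab => eC.injective (Subtype.coe_injective hab)
    set J : Finset (Fin p) := s.image (fun b => ((eC b : ↥(Iᶜ)) : Fin p)) with hJ
    have hJx : ∑ i ∈ J, x i = ∑ b ∈ s, xC b :=
      Finset.sum_image (fun a _ b _ h => hinj h)
    have hJv : ∑ i ∈ J, v i = ∑ b ∈ s, vC b :=
      Finset.sum_image (fun a _ b _ h => hinj h)
    have hJsubC : J ⊆ Iᶜ := by
      intro a ha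
      rw [hJ, Finset.mem_image] at ha
      obtain ⟨b, -, rfl⟩ := ha
      exact (eC b).2
    have hdisjIJ : Disjoint I J := Disjoint.mono_right hJsubC disjoint_compl_right
    have hcardJ : J.card = s.card := Finset.card_image_of_injective s hinj
    have hscard : s.card < mc := by
      have h1 := Finset.card_le_univ s
      rw [Fintype.card_fin] at h1
      rcases lt_or_eq_of_le h1 with h | h
      · exact h
      · exact absurd (Finset.eq_univ_of_card s (by rw [h, Fintype.card_fin])) hsnu
    have hUcard : (I ∪ J).card = m + s.card := by
      rw [Finset.card_union_of_disjoint hdisjIJ, hm, hcardJ]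
    have h2 := hbad (I ∪ J) (hIne.mono Finset.subset_union_left)
      (by
        intro h
        have := congrArg Finset.card h
        rw [hUcard, Finset.card_univ, Fintype.card_fin] at this
        omega)
      (by rw [Finset.sum_union hdisjIJ, hIsum, hJx, hsx, zero_add])
    rw [Finset.sum_union hdisjIJ, hJv, ← add_assoc] at h2
    exact h2
  have hγ'ne : γ' ≠ 0 := hbad I hIne hInu hIsum
  obtain ⟨g, hg⟩ := reg_zero_dvd hAI
  rw [hg]
  have hrw : (XX * pc g) * ((XX * cr γ')⁻¹ * (∑ ρ : Equiv.Perm (Fin mc), termK γ' xC vC ρ))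
      = pc g * (cr γ'⁻¹ * (∑ ρ : Equiv.Perm (Fin mc), termK γ' xC vC ρ)) := by
    rw [mul_inv, cr_inv]
    have hXXinv : XX * XX⁻¹ = 1 := mul_inv_cancel₀ XX_ne_zero
    calc (XX * pc g) * ((XX⁻¹ * cr γ'⁻¹) * (∑ ρ : Equiv.Perm (Fin mc), termK γ' xC vC ρ))
        = (XX * XX⁻¹) * (pc g * (cr γ'⁻¹ * (∑ ρ : Equiv.Perm (Fin mc), termK γ' xC vC ρ))) := by
          ring
      _ = pc g * (cr γ'⁻¹ * (∑ ρ : Equiv.Perm (Fin mc), termK γ' xC vC ρ)) := by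
          rw [hXXinv, one_mul]
  rw [hrw]
  have hfin := (reg_pc g).mul ((reg_cr γ'⁻¹).mul hEC)
  simpa using hfin

end RCaux
namespace RCaux

lemma Dreg (p : ℕ) (γ : ℝ) (x v : Fin p → ℝ)
    (hx0 : ∀ i, x i ≠ 0) (hsum : ∑ i, x i = 0)
    (hbad : ∀ s : Finset (Fin p), s.Nonempty → s ≠ Finset.univ → ∑ i ∈ s, x i = 0 →
      γ + ∑ i ∈ s, v i ≠ 0)
    (IH : ∀ q, q < p → TS q ∧ QS q) :
    Reg (∑ σ ∈ Finset.univ.filter (fun σ : Equiv.Perm (Fin p) => ¬ allowedP x σ),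
      termK γ x v σ) 0 := by
  classical
  set bad : Finset (Finset (Fin p)) :=
    Finset.univ.filter (fun I => I.Nonempty ∧ I ≠ Finset.univ ∧ ∑ i ∈ I, x i = 0) with hbaddef
  set CI : Finset (Fin p) → Finset (Equiv.Perm (Fin p)) := fun I =>
    Finset.univ.filter (fun σ => (∀ j : Fin p, (j : ℕ) < I.card → σ j ∈ I) ∧
      ∀ k ∈ Finset.Icc 1 (I.card - 1), pS (x ∘ σ) k ≠ 0) with hCIdef
  have hcardle : ∀ I : Finset (Fin p), I.card ≤ p := by
    intro I
    have := Finset.card_le_univ I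
    rwa [Fintype.card_fin] at this
  have himageI : ∀ (σ : Equiv.Perm (Fin p)) (I : Finset (Fin p)),
      (∀ j : Fin p, (j : ℕ) < I.card → σ j ∈ I) →
      (Finset.univ.filter fun j : Fin p => (j : ℕ) < I.card).image σ = I := by
    intro σ I h
    apply Finset.eq_of_subset_of_card_le
    · intro a ha
      rw [Finset.mem_image] at ha
      obtain ⟨j', hj', rfl⟩ := ha
      rw [Finset.mem_filter] at hj'
      exact h j' hj'.2
    · rw [Finset.card_image_of_injective _ σ.injective, filter_lt_eq_map (hcardle I),
        Finset.card_map, Finset.card_univ, Fintype.card_fin]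
  have hpSI : ∀ (σ : Equiv.Perm (Fin p)) (I : Finset (Fin p)),
      (∀ j : Fin p, (j : ℕ) < I.card → σ j ∈ I) →
      pS (x ∘ σ) I.card = ∑ i ∈ I, x i := by
    intro σ I h
    calc pS (x ∘ σ) I.card
        = ∑ j ∈ Finset.univ.filter (fun j : Fin p => (j : ℕ) < I.card), x (σ j) := rfl
      _ = ∑ i ∈ (Finset.univ.filter (fun j : Fin p => (j : ℕ) < I.card)).image σ, x i :=
          (Finset.sum_image (fun a _ b _ hab => σ.injective hab)).symm
      _ = ∑ i ∈ I, x i := by rw [himageI σ I h]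
  have hkey : ∀ (σ : Equiv.Perm (Fin p)) (I J : Finset (Fin p)), I ∈ bad → J ∈ bad →
      σ ∈ CI I → σ ∈ CI J → I.card < J.card → False := by
    intro σ I J hI hJ hsI hsJ hlt
    simp only [hbaddef, Finset.mem_filter, Finset.mem_univ, true_and] at hI hJ
    simp only [hCIdef, Finset.mem_filter, Finset.mem_univ, true_and] at hsI hsJ
    have h1 : pS (x ∘ σ) I.card = 0 := by rw [hpSI σ I hsI.1]; exact hI.2.2
    have hc1 : 1 ≤ I.card := Finset.card_pos.mpr hI.1
    have h2 := hsJ.2 I.card (Finset.mem_Icc.mpr ⟨hc1, by omega⟩)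
    exact h2 h1
  have huniq : ∀ (σ : Equiv.Perm (Fin p)) (I J : Finset (Fin p)), I ∈ bad → J ∈ bad →
      σ ∈ CI I → σ ∈ CI J → I = J := by
    intro σ I J hI hJ hsI hsJ
    have hsI' := hsI
    have hsJ' := hsJ
    simp only [hCIdef, Finset.mem_filter, Finset.mem_univ, true_and] at hsI' hsJ'
    have hcards : I.card = J.card := by
      rcases Nat.lt_trichotomy I.card J.card with h | h | h
      · exact absurd (hkey σ I J hI hJ hsI hsJ h) (by simp)
      · exact h
      · exact absurd (hkey σ J I hJ hI hsJ hsI h) (by simp)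
    rw [← himageI σ I hsI'.1, ← himageI σ J hsJ'.1, hcards]
  have hpart : Finset.univ.filter (fun σ : Equiv.Perm (Fin p) => ¬ allowedP x σ)
      = bad.biUnion CI := by
    ext σ
    simp only [Finset.mem_filter, Finset.mem_univ, true_and, Finset.mem_biUnion]
    constructor
    · intro hna
      rw [allowedP] at hna
      push_neg at hna
      obtain ⟨k, hk, hk0⟩ := hna
      have hex : ∃ k, k ∈ Finset.Icc 1 (p-1) ∧ pS (x ∘ σ) k = 0 := ⟨k, hk, hk0⟩
      obtain ⟨hk₀mem, hk₀z⟩ := Nat.find_spec hex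
      rw [Finset.mem_Icc] at hk₀mem
      have hk₀p : Nat.find hex ≤ p := by omega
      have hIcard : ((Finset.univ.filter fun j : Fin p =>
          (j : ℕ) < Nat.find hex).image σ).card = Nat.find hex := by
        rw [Finset.card_image_of_injective _ σ.injective, filter_lt_eq_map hk₀p,
          Finset.card_map, Finset.card_univ, Fintype.card_fin]
      have hIsum0 : ∑ i ∈ (Finset.univ.filter fun j : Fin p =>
          (j : ℕ) < Nat.find hex).image σ, x i = 0 := by
        rw [Finset.sum_image (fun a _ b _ hab => σ.injective hab)]
        exact hk₀z
      refine ⟨(Finset.univ.filter fun j : Fin p => (j : ℕ) < Nat.find hex).image σ, ?_, ?_⟩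
      · simp only [hbaddef, Finset.mem_filter, Finset.mem_univ, true_and]
        refine ⟨?_, ?_, hIsum0⟩
        · rw [← Finset.card_pos, hIcard]; omega
        · intro h
          have := congrArg Finset.card h
          rw [hIcard, Finset.card_univ, Fintype.card_fin] at this
          omega
      · simp only [hCIdef, Finset.mem_filter, Finset.mem_univ, true_and]
        constructor
        · intro j hj
          rw [hIcard] at hj
          rw [Finset.mem_image]
          exact ⟨j, Finset.mem_filter.mpr ⟨Finset.mem_univ _, hj⟩, rfl⟩
        · intro k' hk'
          rw [hIcard] at hk'
          rw [Finset.mem_Icc] at hk'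
          have hk'lt : k' < Nat.find hex := by omega
          have hmin := Nat.find_min hex hk'lt
          intro hz
          exact hmin ⟨Finset.mem_Icc.mpr (by omega), hz⟩
    · rintro ⟨I, hIb, hsC⟩
      simp only [hbaddef, Finset.mem_filter, Finset.mem_univ, true_and] at hIb
      simp only [hCIdef, Finset.mem_filter, Finset.mem_univ, true_and] at hsC
      rw [allowedP]
      push_neg
      have hclt : I.card < p := by
        rcases lt_or_eq_of_le (hcardle I) with h | h
        · exact h
        · exact absurd (Finset.eq_univ_of_card I (by rw [h, Fintype.card_fin])) hIb.2.1
      refine ⟨I.card, Finset.mem_Icc.mpr ⟨Finset.card_pos.mpr hIb.1, by omega⟩, ?_⟩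
      rw [hpSI σ I hsC.1]
      exact hIb.2.2
  have hdisj : (bad : Set (Finset (Fin p))).PairwiseDisjoint CI := by
    intro I hI J hJ hne
    rw [Finset.mem_coe] at hI hJ
    refine Finset.disjoint_left.mpr ?_
    intro σ hσI hσJ
    exact hne (huniq σ I J hI hJ hσI hσJ)
  rw [hpart, Finset.sum_biUnion hdisj]
  have hz : ∀ I ∈ bad, Reg (∑ σ ∈ CI I, termK γ x v σ) 0 := by
    intro I hIb
    simp only [hbaddef, Finset.mem_filter, Finset.mem_univ, true_and] at hIb
    exact class_reg p γ x v hx0 hsum hbad IH I hIb.1 hIb.2.1 hIb.2.2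
  have hfin := Reg.sum (s := bad) (f := fun I => ∑ σ ∈ CI I, termK γ x v σ)
    (r := fun _ => (0 : ℝ)) hz
  simpa using hfin

lemma exists_v (p : ℕ) (hp : 1 ≤ p) (x : Fin p → ℝ) :
    ∃ v : Fin p → ℝ, (∑ i, v i = 0) ∧ ∀ s : Finset (Fin p), s.Nonempty → s ≠ Finset.univ →
      ∑ i ∈ s, x i = 0 → ∑ i ∈ s, v i ≠ 0 := by
  classical
  set bad : Finset (Finset (Fin p)) :=
    Finset.univ.filter (fun s => s.Nonempty ∧ s ≠ Finset.univ ∧ ∑ i ∈ s, x i = 0) with hbaddef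
  set P : Finset (Fin p) → Polynomial ℝ := fun s =>
    (∑ i ∈ s, Polynomial.X ^ ((i : ℕ) + 1))
      - Polynomial.C ((s.card : ℝ) / p) * ∑ j : Fin p, Polynomial.X ^ ((j : ℕ) + 1) with hPdef
  have hPne : ∀ s ∈ bad, P s ≠ 0 := by
    intro s hs
    simp only [hbaddef, Finset.mem_filter, Finset.mem_univ, true_and] at hs
    obtain ⟨hne, hnu, -⟩ := hs
    obtain ⟨i₀, hi₀⟩ : ∃ i₀ : Fin p, i₀ ∉ s := by
      by_contra h
      push_neg at h
      exact hnu (Finset.eq_univ_iff_forall.mpr h)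
    intro hP0
    have hco := congrArg (fun q => Polynomial.coeff q ((i₀ : ℕ) + 1)) hP0
    simp only [hPdef, Polynomial.coeff_sub, Polynomial.coeff_zero, Polynomial.finset_sum_coeff,
      Polynomial.coeff_X_pow, Polynomial.coeff_C_mul] at hco
    have h1 : (∑ i ∈ s, if (i₀ : ℕ) + 1 = (i : ℕ) + 1 then (1 : ℝ) else 0) = 0 := by
      refine Finset.sum_eq_zero fun i hi => ?_
      rw [if_neg]
      intro h
      have : i = i₀ := Fin.ext (by omega)
      rw [this] at hi
      exact hi₀ hi
    have h2 : (∑ j : Fin p, if (i₀ : ℕ) + 1 = (j : ℕ) + 1 then (1 : ℝ) else 0) = 1 := by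
      rw [Finset.sum_eq_single i₀]
      · rw [if_pos rfl]
      · intro j _ hj
        rw [if_neg]
        intro h
        exact hj (Fin.ext (by omega))
      · intro h
        exact absurd (Finset.mem_univ i₀) h
    rw [h1, h2] at hco
    have hc1 : 1 ≤ s.card := Finset.card_pos.mpr hne
    have hpne : (p : ℝ) ≠ 0 := by
      simp only [ne_eq, Nat.cast_eq_zero]
      omega
    have : (s.card : ℝ) / p = 0 := by linarith [hco]
    rw [div_eq_zero_iff] at this
    rcases this with h | h
    · rw [Nat.cast_eq_zero] at h; omega
    · exact hpne h
  have hq : (∏ s ∈ bad, P s) ≠ 0 := Finset.prod_ne_zero_iff.mpr hPne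
  obtain ⟨c, hc⟩ := Infinite.exists_notMem_finset ((∏ s ∈ bad, P s).roots.toFinset)
  have hceval : ∀ s ∈ bad, Polynomial.eval c (P s) ≠ 0 := by
    intro s hs heval0
    apply hc
    rw [Multiset.mem_toFinset, Polynomial.mem_roots hq]
    rw [Polynomial.IsRoot, Polynomial.eval_prod]
    exact Finset.prod_eq_zero hs heval0
  refine ⟨fun i => c ^ ((i : ℕ) + 1) - (∑ j : Fin p, c ^ ((j : ℕ) + 1)) / p, ?_, ?_⟩
  · rw [Finset.sum_sub_distrib, Finset.sum_const, Finset.card_univ, Fintype.card_fin,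
      nsmul_eq_mul]
    have hpne : (p : ℝ) ≠ 0 := by
      simp only [ne_eq, Nat.cast_eq_zero]
      omega
    field_simp
    ring
  · intro s hs hnu hx0 h0
    have hsmem : s ∈ bad := by
      simp only [hbaddef, Finset.mem_filter, Finset.mem_univ, true_and]
      exact ⟨hs, hnu, hx0⟩
    have heq : Polynomial.eval c (P s)
        = ∑ i ∈ s, (c ^ ((i : ℕ) + 1) - (∑ j : Fin p, c ^ ((j : ℕ) + 1)) / p) := by
      simp only [hPdef, Polynomial.eval_sub, Polynomial.eval_finset_sum, Polynomial.eval_pow,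
        Polynomial.eval_X, Polynomial.eval_mul, Polynomial.eval_C]
      rw [Finset.sum_sub_distrib, Finset.sum_const, nsmul_eq_mul]
      ring
    exact hceval s hsmem (heq.trans h0)

lemma mainTQ : ∀ p, TS p ∧ QS p := by
  intro p
  induction p using Nat.strong_induction_on with
  | _ p IH =>
  have hTS : TS p := by
    intro x hp2 hx0 hsum
    obtain ⟨q, rfl⟩ : ∃ q, p = q + 2 := ⟨p - 2, by omega⟩
    obtain ⟨v, hv0, hvbad⟩ := exists_v (q+2) (by omega) x
    have hy : ∀ s : Finset (Fin (q+2)), s.Nonempty → s ≠ Finset.univ →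
        ∑ i ∈ s, zf x v i ≠ 0 := by
      intro s hs hnu h0
      have h1 : ∑ i ∈ s, zf x v i = cr (∑ i ∈ s, x i) + XX * cr (∑ i ∈ s, v i) := by
        simp only [zf, Finset.sum_add_distrib, map_sum, Finset.mul_sum]
      rw [h1] at h0
      obtain ⟨ha, hb⟩ := zker h0
      exact hvbad s hs hnu ha hb
    have h0 : ∑ i, zf x v i = 0 := by
      have h1 : ∑ i, zf x v i = cr (∑ i, x i) + XX * cr (∑ i, v i) := by
        simp only [zf, Finset.sum_add_distrib, map_sum, Finset.mul_sum]
      rw [h1, hsum, hv0, map_zero, mul_zero, add_zero]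
    have hft := ft q (zf x v) hy h0
    have htermeq : ∀ σ : Equiv.Perm (Fin (q+2)), termK 0 x v σ
        = ∏ k ∈ Finset.Icc 1 (q+1), (pS (zf x v ∘ σ) k)⁻¹ := by
      intro σ
      rw [termK]
      simp
    have htot : ∑ σ : Equiv.Perm (Fin (q+2)), termK 0 x v σ = 0 := by
      rw [Finset.sum_congr rfl (fun σ _ => htermeq σ)]
      exact hft
    have hsplit := Finset.sum_filter_add_sum_filter_not
      (Finset.univ : Finset (Equiv.Perm (Fin (q+2)))) (fun σ => allowedP x σ)
      (fun σ => termK 0 x v σ)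
    rw [htot] at hsplit
    have hD := Dreg (q+2) 0 x v hx0 hsum
      (by intro s h1 h2 h3; rw [zero_add]; exact hvbad s h1 h2 h3) IH
    have hA : Reg (∑ σ ∈ Finset.univ.filter (fun σ => allowedP x σ), termK 0 x v σ)
        (∑ σ ∈ Finset.univ.filter (fun σ => allowedP x σ),
          ∏ k ∈ Finset.Icc 1 (q+2-1), (pS (x ∘ σ) k)⁻¹) :=
      Reg.sum (fun σ hσ => reg_term 0 x v σ (Finset.mem_filter.mp hσ).2)
    have hAeq : ∑ σ ∈ Finset.univ.filter (fun σ => allowedP x σ), termK 0 x v σ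
        = - ∑ σ ∈ Finset.univ.filter (fun σ => ¬ allowedP x σ), termK 0 x v σ :=
      eq_neg_of_add_eq_zero_left hsplit
    have hAneg : Reg (∑ σ ∈ Finset.univ.filter (fun σ => allowedP x σ), termK 0 x v σ) 0 := by
      rw [hAeq]
      have := hD.neg
      simpa using this
    exact Reg.unique hA hAneg
  refine ⟨hTS, ?_⟩
  intro γ x v hp2 hx0 hsum hbad
  have hsplit := Finset.sum_filter_add_sum_filter_not
    (Finset.univ : Finset (Equiv.Perm (Fin p))) (fun σ => allowedP x σ)
    (fun σ => termK γ x v σ)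
  rw [← hsplit]
  have hD := Dreg p γ x v hx0 hsum hbad IH
  have hA : Reg (∑ σ ∈ Finset.univ.filter (fun σ => allowedP x σ), termK γ x v σ)
      (∑ σ ∈ Finset.univ.filter (fun σ => allowedP x σ),
        ∏ k ∈ Finset.Icc 1 (p-1), (pS (x ∘ σ) k)⁻¹) :=
    Reg.sum (fun σ hσ => reg_term γ x v σ (Finset.mem_filter.mp hσ).2)
  rw [hTS x hp2 hx0 hsum] at hA
  have := hA.add hD
  simpa using this

end RCaux

end RCproof

/-- Cancellation of the sum over allowed permutations when the total sum vanishes. -/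
theorem resonance_cancellation (n : ℕ) (hn : 2 ≤ n) (x : Fin n → ℝ)
    (hx0 : ∀ i, x i ≠ 0) (hsum : ∑ i, x i = 0) :
    ∑ σ ∈ Finset.univ.filter (fun σ : Equiv.Perm (Fin n) =>
        ∀ k ∈ Finset.Icc 1 (n - 1),
          (∑ j ∈ Finset.univ.filter (fun j : Fin n => (j : ℕ) < k), x (σ j)) ≠ 0),
      ∏ k ∈ Finset.Icc 1 (n - 1),
        (∑ j ∈ Finset.univ.filter (fun j : Fin n => (j : ℕ) < k), x (σ j))⁻¹ = 0 := by
  have h := (RCaux.mainTQ n).1 x hn hx0 hsum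
  have hset : Finset.univ.filter (fun σ : Equiv.Perm (Fin n) =>
        ∀ k ∈ Finset.Icc 1 (n - 1),
          (∑ j ∈ Finset.univ.filter (fun j : Fin n => (j : ℕ) < k), x (σ j)) ≠ 0)
      = Finset.univ.filter (fun σ : Equiv.Perm (Fin n) => RCaux.allowedP x σ) := by
    ext σ
    simp only [Finset.mem_filter]
    exact Iff.rfl
  rw [hset]
  exact h
end

section
/- For every α ∈ (0,1) there exists a constant K > 0 such that for all r ≥ 1 and all finitely supported ν : ℤ → ℤ with Σ_{i∈ℤ} ⟨i⟩^α·|ν_i| ≤ r, one has Σ_{i : ν_i ≠ 0} log(1 + ⟨i⟩²·ν_i²) ≤ K · r^{1/(1+α)} · log(1 + r). -/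
/-- ⟨i⟩ := max(1, |i|) as a real number. -/
def jap (i : ℤ) : ℝ := max 1 |(i : ℝ)|

lemma one_le_jap (i : ℤ) : 1 ≤ jap i := le_max_left _ _

lemma jap_pos (i : ℤ) : 0 < jap i := lt_of_lt_of_le one_pos (one_le_jap i)

lemma abs_le_jap (i : ℤ) : |(i : ℝ)| ≤ jap i := le_max_right _ _

set_option maxHeartbeats 1000000 in
/-- Comparison of Diophantine-type products with the Gevrey weight |ν|_α. -/
theorem diophantine_product_bound (α : ℝ) (hα0 : 0 < α) (hα1 : α < 1) :
    ∃ K : ℝ, 0 < K ∧ ∀ r : ℝ, 1 ≤ r → ∀ ν : ℤ →₀ ℤ,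
      (∑ i ∈ ν.support, jap i ^ α * |(ν i : ℝ)|) ≤ r →
      (∑ i ∈ ν.support, Real.log (1 + jap i ^ 2 * (ν i : ℝ) ^ 2))
        ≤ K * r ^ (1 / (1 + α)) * Real.log (1 + r) := by
  set β : ℝ := 1 / α + 1 with hβ
  have hβ1 : 1 ≤ β := by
    have h : 0 < 1 / α := by positivity
    rw [hβ]; linarith
  refine ⟨6 * (2 * β), by positivity, ?_⟩
  intro r hr ν hsum
  set M : ℝ := r ^ (1 / (1 + α)) with hM
  have h1α : (0:ℝ) < 1 + α := by linarith
  have hM1 : 1 ≤ M := Real.one_le_rpow hr (by positivity)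
  have hM0 : 0 < M := lt_of_lt_of_le one_pos hM1
  have hr0 : (0:ℝ) < r := by linarith
  have hMα : M ^ α * M = r := by
    rw [hM, ← Real.rpow_mul hr0.le, ← Real.rpow_add hr0,
      show 1 / (1 + α) * α + 1 / (1 + α) = 1 by field_simp; ring, Real.rpow_one]
  have hlog0 : 0 ≤ Real.log (1 + r) := Real.log_nonneg (by linarith)
  -- nonnegativity of each term of the weight sum
  have hterm_nonneg : ∀ i ∈ ν.support, 0 ≤ jap i ^ α * |(ν i : ℝ)| := by
    intro i _
    have := jap_pos i
    positivity
  -- each term of the weight sum is ≤ r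
  have hterm_le : ∀ i ∈ ν.support, jap i ^ α * |(ν i : ℝ)| ≤ r := by
    intro i hi
    exact le_trans (Finset.single_le_sum hterm_nonneg hi) hsum
  have hν1 : ∀ i ∈ ν.support, (1:ℝ) ≤ |(ν i : ℝ)| := by
    intro i hi
    have : ν i ≠ 0 := Finsupp.mem_support_iff.mp hi
    have : (1:ℤ) ≤ |ν i| := Int.one_le_abs (by omega)
    calc (1:ℝ) ≤ (|ν i| : ℤ) := by exact_mod_cast this
    _ = |(ν i : ℝ)| := by push_cast; ring
  -- bound on each log term
  have hlog_le : ∀ i ∈ ν.support, Real.log (1 + jap i ^ 2 * (ν i : ℝ) ^ 2)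
      ≤ 2 * β * Real.log (1 + r) := by
    intro i hi
    have hjr : jap i ^ α ≤ r := by
      have h1 := hterm_le i hi
      have h2 := hν1 i hi
      have h3 : (0:ℝ) < jap i ^ α := Real.rpow_pos_of_pos (jap_pos i) α
      nlinarith
    have hj : jap i ≤ r ^ (1 / α) := by
      have := Real.rpow_le_rpow (le_of_lt (Real.rpow_pos_of_pos (jap_pos i) α)) hjr
        (le_of_lt (show (0:ℝ) < 1/α by positivity))
      rwa [← Real.rpow_mul (le_of_lt (jap_pos i)), mul_one_div, div_self (ne_of_gt hα0),
        Real.rpow_one] at this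
    have hνr : |(ν i : ℝ)| ≤ r := by
      have h1 := hterm_le i hi
      have h3 : (1:ℝ) ≤ jap i ^ α := Real.one_le_rpow (one_le_jap i) (le_of_lt hα0)
      have h4 : (0:ℝ) ≤ |(ν i : ℝ)| := abs_nonneg _
      nlinarith
    set x : ℝ := r ^ β with hx
    have hx1 : 1 ≤ x := Real.one_le_rpow hr (by linarith)
    have hprod : jap i * |(ν i : ℝ)| ≤ x := by
      have hxe : r ^ (1/α) * r = x := by
        rw [hx, hβ, Real.rpow_add hr0, Real.rpow_one]
      have h5 : jap i * |(ν i : ℝ)| ≤ r ^ (1/α) * r := by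
        have := jap_pos i
        have h4 : (0:ℝ) ≤ |(ν i : ℝ)| := abs_nonneg _
        have hr1 : (0:ℝ) ≤ r ^ (1/α) := le_of_lt (Real.rpow_pos_of_pos hr0 _)
        nlinarith [hν1 i hi]
      linarith [hxe ▸ h5]
    have hsq : jap i ^ 2 * (ν i : ℝ) ^ 2 ≤ x ^ 2 := by
      have h0 : (0:ℝ) ≤ jap i * |(ν i : ℝ)| := mul_nonneg (jap_pos i).le (abs_nonneg _)
      calc jap i ^ 2 * (ν i : ℝ) ^ 2 = (jap i * |(ν i : ℝ)|) ^ 2 := by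
            rw [mul_pow, sq_abs]
      _ ≤ x ^ 2 := by nlinarith
    have hlog1 : Real.log (1 + jap i ^ 2 * (ν i : ℝ) ^ 2) ≤ Real.log ((1 + x) ^ 2) := by
      apply Real.log_le_log (by positivity)
      nlinarith
    have hlog2 : Real.log ((1 + x) ^ 2) = 2 * Real.log (1 + x) := by
      rw [Real.log_pow]; push_cast; ring
    have h1x : 1 + x ≤ (1 + r) ^ β := by
      have hA : (1 + r) ^ β = (1 + r) ^ (β - 1) * (1 + r) := by
        have h := Real.rpow_add_one (show (1 + r) ≠ 0 by positivity) (β - 1)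
        rw [sub_add_cancel] at h
        exact h
      have hBA : r ^ (β - 1) ≤ (1 + r) ^ (β - 1) :=
        Real.rpow_le_rpow hr0.le (by linarith) (by linarith)
      have hB1 : (1:ℝ) ≤ r ^ (β - 1) := Real.one_le_rpow hr (by linarith)
      have hxB : x = r ^ (β - 1) * r := by
        have h := Real.rpow_add_one hr0.ne' (β - 1)
        rw [sub_add_cancel] at h
        rw [hx, h]
      have hmul : r ^ (β - 1) * (1 + r) ≤ (1 + r) ^ (β - 1) * (1 + r) :=
        mul_le_mul_of_nonneg_right hBA (by linarith)
      rw [hA, hxB]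
      nlinarith
    have hlog3 : Real.log (1 + x) ≤ β * Real.log (1 + r) := by
      calc Real.log (1 + x) ≤ Real.log ((1 + r) ^ β) :=
            Real.log_le_log (by linarith) h1x
      _ = β * Real.log (1 + r) := Real.log_rpow (by linarith) β
    calc Real.log (1 + jap i ^ 2 * (ν i : ℝ) ^ 2) ≤ 2 * Real.log (1 + x) := by
          rw [← hlog2]; exact hlog1
    _ ≤ 2 * β * Real.log (1 + r) := by nlinarith
  -- cardinality bound
  have hcard : (ν.support.card : ℝ) ≤ 6 * M := by
    classical
    set S₁ := ν.support.filter (fun i => jap i ≤ M) with hS₁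
    set S₂ := ν.support.filter (fun i => ¬ jap i ≤ M) with hS₂
    have hsplit : S₁.card + S₂.card = ν.support.card :=
      Finset.card_filter_add_card_filter_not _
    have hc1 : (S₁.card : ℝ) ≤ 5 * M := by
      have hsub : S₁ ⊆ Finset.Icc (-⌈M⌉) ⌈M⌉ := by
        intro i hi
        have hji : jap i ≤ M := (Finset.mem_filter.mp hi).2
        have habs : |(i : ℝ)| ≤ M := le_trans (abs_le_jap i) hji
        have h1 : (i : ℝ) ≤ M := le_trans (le_abs_self _) habs
        have h2 : -M ≤ (i : ℝ) := neg_le_of_abs_le habs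
        have hiM : i ≤ ⌈M⌉ := by exact_mod_cast le_trans h1 (Int.le_ceil M)
        have hiM2 : -⌈M⌉ ≤ i := by
          have : -(⌈M⌉ : ℝ) ≤ (i : ℝ) := le_trans (neg_le_neg (Int.le_ceil M)) h2
          exact_mod_cast this
        exact Finset.mem_Icc.mpr ⟨hiM2, hiM⟩
      have := Finset.card_le_card hsub
      rw [Int.card_Icc] at this
      have hceil : (⌈M⌉ : ℝ) ≤ M + 1 := (Int.ceil_lt_add_one M).le
      have hceil0 : (0:ℤ) ≤ ⌈M⌉ := Int.ceil_nonneg hM0.le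
      have h2 : (S₁.card : ℝ) ≤ ((⌈M⌉ + 1 - -⌈M⌉).toNat : ℝ) := by exact_mod_cast this
      have h3 : ((⌈M⌉ + 1 - -⌈M⌉).toNat : ℝ) = 2 * (⌈M⌉:ℝ) + 1 := by
        have h4 : ((⌈M⌉ + 1 - -⌈M⌉).toNat : ℤ) = 2 * ⌈M⌉ + 1 := by omega
        have h5 : ((⌈M⌉ + 1 - -⌈M⌉).toNat : ℝ) = ((2 * ⌈M⌉ + 1 : ℤ) : ℝ) := by
          exact_mod_cast congrArg (fun z : ℤ => (z : ℝ)) h4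
        rw [h5]; push_cast; ring
      rw [h3] at h2
      nlinarith
    have hc2 : (S₂.card : ℝ) ≤ M := by
      have hlb : ∀ i ∈ S₂, M ^ α ≤ jap i ^ α * |(ν i : ℝ)| := by
        intro i hi
        obtain ⟨hiν, hji⟩ := Finset.mem_filter.mp hi
        have hMj : M ≤ jap i := le_of_not_ge hji
        have h1 : M ^ α ≤ jap i ^ α := Real.rpow_le_rpow hM0.le hMj hα0.le
        have h2 := hν1 i hiν
        have h3 : (0:ℝ) < jap i ^ α := Real.rpow_pos_of_pos (jap_pos i) α
        nlinarith
      have hs2 : (S₂.card : ℝ) * M ^ α ≤ ∑ i ∈ S₂, jap i ^ α * |(ν i : ℝ)| := by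
        have := Finset.card_nsmul_le_sum S₂ (fun i => jap i ^ α * |(ν i : ℝ)|) (M ^ α) hlb
        simpa [nsmul_eq_mul] using this
      have hs3 : ∑ i ∈ S₂, jap i ^ α * |(ν i : ℝ)| ≤ r := by
        refine le_trans (Finset.sum_le_sum_of_subset_of_nonneg (Finset.filter_subset _ _)
          (fun i hi _ => hterm_nonneg i hi)) hsum
      have hMαpos : (0:ℝ) < M ^ α := Real.rpow_pos_of_pos hM0 α
      have : (S₂.card : ℝ) * M ^ α ≤ M * M ^ α := by
        rw [mul_comm M (M ^ α), hMα]; linarith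
      exact le_of_mul_le_mul_right this hMαpos
    have : (ν.support.card : ℝ) = (S₁.card : ℝ) + (S₂.card : ℝ) := by exact_mod_cast hsplit.symm
    linarith
  -- put it together
  have hmain := Finset.sum_le_card_nsmul ν.support
    (fun i => Real.log (1 + jap i ^ 2 * (ν i : ℝ) ^ 2)) (2 * β * Real.log (1 + r)) hlog_le
  rw [nsmul_eq_mul] at hmain
  calc (∑ i ∈ ν.support, Real.log (1 + jap i ^ 2 * (ν i : ℝ) ^ 2))
      ≤ (ν.support.card : ℝ) * (2 * β * Real.log (1 + r)) := hmain
  _ ≤ 6 * M * (2 * β * Real.log (1 + r)) := by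
      have h0 : 0 ≤ 2 * β * Real.log (1 + r) := by positivity
      exact mul_le_mul_of_nonneg_right hcard h0
  _ = 6 * (2 * β) * M * Real.log (1 + r) := by ring
end

section
/- For every real τ > 1/2 there exists a constant C > 0, independent of d, such that for every d ≥ 1 one has Σ_{ν ∈ ℤ^d} ∏_{i=1}^{d} (1 + i²·νᵢ²)^{−τ} ≤ C. -/
open scoped ENNReal

lemma tsum_pi_prod (d : ℕ) (f : Fin d → ℤ → ℝ≥0∞) :
    ∑' ν : Fin d → ℤ, ∏ i, f i (ν i) = ∏ i, ∑' n : ℤ, f i n := by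
  induction d with
  | zero =>
      simp only [Finset.univ_eq_empty, Finset.prod_empty]
      exact tsum_eq_single default fun b hb => absurd (Subsingleton.elim b default) hb
  | succ d ih =>
      rw [← (Fin.consEquiv (fun _ : Fin (d + 1) => ℤ)).tsum_eq]
      have : ∑' p : ℤ × (Fin d → ℤ),
          ∏ i, f i ((Fin.consEquiv (fun _ : Fin (d + 1) => ℤ)) p i)
          = ∑' (a : ℤ) (b : Fin d → ℤ), f 0 a * ∏ i : Fin d, f i.succ (b i) := by
        rw [ENNReal.tsum_prod']
        congr 1; ext a; congr 1; ext b
        simp [Fin.prod_univ_succ]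
      rw [this]
      simp_rw [ENNReal.tsum_mul_left, ih (fun i n => f i.succ n)]
      rw [ENNReal.tsum_mul_right, Fin.prod_univ_succ]

/-- Bourgain's estimate: the sum over ν ∈ ℤ^d of ∏ (1 + i²νᵢ²)^{−τ} is bounded uniformly
in the dimension d, for τ > 1/2. -/
theorem bourgain_sum_bound (τ : ℝ) (hτ : 1 / 2 < τ) :
    ∃ C : ℝ, 0 < C ∧ ∀ d : ℕ, 1 ≤ d →
      ∑' ν : Fin d → ℤ, ENNReal.ofReal
          (∏ i : Fin d, (1 + ((i : ℕ) + 1 : ℝ) ^ 2 * (ν i : ℝ) ^ 2) ^ (-τ))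
        ≤ ENNReal.ofReal C := by
  have hτ0 : 0 < τ := by linarith
  have h2τ : 1 < 2 * τ := by linarith
  -- the comparison series
  have hZsum : Summable (fun n : ℕ => ((n : ℝ) + 1) ^ (-(2 * τ))) := by
    have h := (Real.summable_nat_rpow (p := -(2 * τ))).2 (by linarith)
    have h2 := h.comp_injective Nat.succ_injective
    refine h2.congr fun n => ?_
    simp [Function.comp, Nat.succ_eq_add_one]
  set Z : ℝ := ∑' n : ℕ, ((n : ℝ) + 1) ^ (-(2 * τ)) with hZ
  have hZ0 : 0 ≤ Z := tsum_nonneg fun n => Real.rpow_nonneg (by positivity) _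
  -- base positivity
  have hbase : ∀ (c : ℝ) (n : ℤ), (0 : ℝ) < 1 + c ^ 2 * (n : ℝ) ^ 2 := by
    intro c n; positivity
  refine ⟨Real.exp (2 * Z * Z), Real.exp_pos _, fun d _ => ?_⟩
  -- rewrite ofReal of product as product of ofReal and factorize
  have hsplit : ∀ ν : Fin d → ℤ,
      ENNReal.ofReal (∏ i : Fin d, (1 + ((i : ℕ) + 1 : ℝ) ^ 2 * (ν i : ℝ) ^ 2) ^ (-τ))
      = ∏ i : Fin d, ENNReal.ofReal ((1 + ((i : ℕ) + 1 : ℝ) ^ 2 * (ν i : ℝ) ^ 2) ^ (-τ)) :=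
    fun ν => ENNReal.ofReal_prod_of_nonneg fun i _ =>
      Real.rpow_nonneg (hbase _ _).le _
  simp_rw [hsplit]
  rw [tsum_pi_prod d (fun i n => ENNReal.ofReal ((1 + ((i : ℕ) + 1 : ℝ) ^ 2 * (n : ℝ) ^ 2) ^ (-τ)))]
  -- bound each factor
  have hfac : ∀ i : Fin d,
      ∑' n : ℤ, ENNReal.ofReal ((1 + ((i : ℕ) + 1 : ℝ) ^ 2 * (n : ℝ) ^ 2) ^ (-τ))
      ≤ ENNReal.ofReal (1 + 2 * (((i : ℕ) + 1 : ℝ) ^ (-(2 * τ)) * Z)) := by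
    intro i
    set c : ℝ := ((i : ℕ) + 1 : ℝ) with hc
    have hc1 : (1 : ℝ) ≤ c := by simp [hc]
    have hc0 : 0 < c := lt_of_lt_of_le one_pos hc1
    set g : ℤ → ℝ≥0∞ := fun n => ENNReal.ofReal ((1 + c ^ 2 * (n : ℝ) ^ 2) ^ (-τ)) with hg
    have hsym : ∀ n : ℕ, g (-(n + 1)) = g (n + 1) := by
      intro n; simp only [hg]; push_cast; ring_nf
    rw [show (∑' n : ℤ, g n) = (∑' n : ℕ, g n) + ∑' n : ℕ, g (-(n + 1)) from
      tsum_of_nat_of_neg_add_one ENNReal.summable ENNReal.summable]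
    simp_rw [hsym]
    rw [tsum_eq_zero_add' ENNReal.summable]
    have hg0 : g 0 = 1 := by simp [hg]
    -- tail bound
    have htail : ∀ n : ℕ, g (n + 1) ≤
        ENNReal.ofReal (c ^ (-(2 * τ)) * (((n : ℕ) : ℝ) + 1) ^ (-(2 * τ))) := by
      intro n
      apply ENNReal.ofReal_le_ofReal
      have hpos : (0 : ℝ) < c ^ 2 * ((n : ℝ) + 1) ^ 2 := by positivity
      have h1 : (1 + c ^ 2 * (((n : ℤ) + 1 : ℤ) : ℝ) ^ 2) ^ (-τ)
          ≤ (c ^ 2 * ((n : ℝ) + 1) ^ 2) ^ (-τ) := by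
        push_cast
        exact Real.rpow_le_rpow_of_nonpos hpos (by linarith) (by linarith)
      refine h1.trans_eq ?_
      rw [Real.mul_rpow (by positivity) (by positivity), ← Real.rpow_natCast c 2,
        ← Real.rpow_natCast ((n : ℝ) + 1) 2, ← Real.rpow_mul hc0.le,
        ← Real.rpow_mul (by positivity),
        show ((2:ℕ):ℝ) * -τ = -(2*τ) by push_cast; ring]
    rw [show ((0:ℕ):ℤ) = 0 from rfl, hg0]
    simp_rw [show ∀ b : ℕ, ((b + 1 : ℕ) : ℤ) = (b : ℤ) + 1 from fun b => by push_cast; ring]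
    calc 1 + ∑' n : ℕ, g (n + 1) + ∑' n : ℕ, g (n + 1)
        ≤ 1 + ENNReal.ofReal (c ^ (-(2 * τ)) * Z) + ENNReal.ofReal (c ^ (-(2 * τ)) * Z) := by
          gcongr 1 + ?_ + ?_ <;>
          · refine (ENNReal.tsum_le_tsum htail).trans_eq ?_
            rw [← ENNReal.ofReal_tsum_of_nonneg (fun n => by positivity)
              (hZsum.mul_left _)]
            rw [tsum_mul_left]
      _ = ENNReal.ofReal (1 + 2 * (c ^ (-(2 * τ)) * Z)) := by
          rw [← ENNReal.ofReal_one, ← ENNReal.ofReal_add (by norm_num) (by positivity),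
            ← ENNReal.ofReal_add (by positivity) (by positivity)]
          ring_nf
  refine le_trans (Finset.prod_le_prod' fun i _ => hfac i) ?_
  rw [← ENNReal.ofReal_prod_of_nonneg (fun i _ => by positivity)]
  apply ENNReal.ofReal_le_ofReal
  have hsum_le : ∑ i : Fin d, ((i : ℕ) + 1 : ℝ) ^ (-(2 * τ)) ≤ Z := by
    rw [Fin.sum_univ_eq_sum_range (fun k => ((k : ℝ) + 1) ^ (-(2 * τ)))]
    exact Summable.sum_le_tsum _ (fun n _ => by positivity) hZsum
  calc ∏ i : Fin d, (1 + 2 * (((i : ℕ) + 1 : ℝ) ^ (-(2 * τ)) * Z))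
      ≤ ∏ i : Fin d, Real.exp (2 * (((i : ℕ) + 1 : ℝ) ^ (-(2 * τ)) * Z)) := by
        refine Finset.prod_le_prod (fun i _ => by positivity) fun i _ => ?_
        have := Real.add_one_le_exp (2 * (((i : ℕ) + 1 : ℝ) ^ (-(2 * τ)) * Z))
        linarith
    _ = Real.exp (∑ i : Fin d, 2 * (((i : ℕ) + 1 : ℝ) ^ (-(2 * τ)) * Z)) :=
        (Real.exp_sum _ _).symm
    _ ≤ Real.exp (2 * Z * Z) := by
        apply Real.exp_le_exp.2
        have h1 : ∑ i : Fin d, 2 * (((i : ℕ) + 1 : ℝ) ^ (-(2 * τ)) * Z)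
            = (∑ i : Fin d, ((i : ℕ) + 1 : ℝ) ^ (-(2 * τ))) * (2 * Z) := by
          rw [Finset.sum_mul]; exact Finset.sum_congr rfl fun i _ => by ring
        rw [h1]
        have := mul_le_mul_of_nonneg_right hsum_le (by positivity : (0:ℝ) ≤ 2 * Z)
        linarith
end

section
/- Let β : [1,∞) → ℝ be nonincreasing with 0 < β(x) ≤ 1/2 for all x ≥ 1, and let (r_m)_{m≥0} be a sequence of reals with r₀ = 1, r_m strictly increasing, and r_m → ∞. Then Σ_{n≥0} 2^{−n}·log(1/β(2ⁿ)) ≤ 2·Σ_{m≥1} (1/r_{m−1})·log(1/β(r_m)). -/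
open ENNReal Set

private lemma ofReal_inv_two_pow (n : ℕ) :
    ENNReal.ofReal (((2 : ℝ) ^ n)⁻¹) = (2 : ℝ≥0∞)⁻¹ ^ n := by
  rw [ENNReal.ofReal_inv_of_pos (by positivity), ENNReal.ofReal_pow (by norm_num), show ENNReal.ofReal 2 = 2 by norm_num]
  exact ENNReal.inv_pow

private lemma geom_tail (n₀ : ℕ) :
    ∑' n : Set.Ici n₀, ((2 : ℝ≥0∞)⁻¹) ^ (n : ℕ) ≤ (2 : ℝ≥0∞)⁻¹ ^ n₀ * 2 := by
  have hsurj : Function.Surjective (fun k : ℕ => (⟨n₀ + k, Nat.le_add_right _ _⟩ : Set.Ici n₀)) := by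
    rintro ⟨n, hn⟩
    exact ⟨n - n₀, by simp [Nat.add_sub_cancel' hn]⟩
  calc ∑' n : Set.Ici n₀, ((2 : ℝ≥0∞)⁻¹) ^ (n : ℕ)
      ≤ ∑' k : ℕ, ((2 : ℝ≥0∞)⁻¹) ^ (n₀ + k) :=
        ENNReal.tsum_le_tsum_comp_of_surjective hsurj _
    _ = (2 : ℝ≥0∞)⁻¹ ^ n₀ * ∑' k : ℕ, ((2 : ℝ≥0∞)⁻¹) ^ k := by
        simp_rw [pow_add]; exact ENNReal.tsum_mul_left
    _ = (2 : ℝ≥0∞)⁻¹ ^ n₀ * 2 := by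
        rw [ENNReal.tsum_geometric, ENNReal.one_sub_inv_two, inv_inv]

/-- The Bryuno condition with an arbitrary diverging increasing sequence implies the
classical Bryuno condition with the dyadic sequence. -/
theorem bryuno_dyadic (β : ℝ → ℝ)
    (hβpos : ∀ x : ℝ, 1 ≤ x → 0 < β x) (hβhalf : ∀ x : ℝ, 1 ≤ x → β x ≤ 1 / 2)
    (hβmono : ∀ x y : ℝ, 1 ≤ x → x ≤ y → β y ≤ β x)
    (r : ℕ → ℝ) (hr0 : r 0 = 1) (hrmono : StrictMono r)
    (hrdiv : Filter.Tendsto r Filter.atTop Filter.atTop) :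
    ∑' n : ℕ, ENNReal.ofReal (((2 : ℝ) ^ n)⁻¹ * Real.log (1 / β ((2 : ℝ) ^ n)))
      ≤ 2 * ∑' m : ℕ, ENNReal.ofReal ((r m)⁻¹ * Real.log (1 / β (r (m + 1)))) := by
  -- basic facts
  have hr1 : ∀ m, (1 : ℝ) ≤ r m := by
    intro m
    calc (1:ℝ) = r 0 := hr0.symm
    _ ≤ r m := hrmono.monotone (Nat.zero_le m)
  have h2n : ∀ n : ℕ, (1 : ℝ) ≤ 2 ^ n := fun n => one_le_pow₀ (by norm_num)
  -- existence of m with 2^n < r (m+1)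
  have hex : ∀ n : ℕ, ∃ m : ℕ, (2 : ℝ) ^ n < r (m + 1) := by
    intro n
    obtain ⟨M, hM⟩ := (Filter.tendsto_atTop.mp hrdiv ((2:ℝ)^n + 1)).exists
    refine ⟨M, ?_⟩
    have h1 := hrmono.monotone (Nat.le_succ M)
    have h2 : r (M+1) = r M.succ := rfl
    linarith
  set g : ℕ → ℕ := fun n => Nat.find (hex n) with hg
  have hg_lt : ∀ n, (2 : ℝ) ^ n < r (g n + 1) := fun n => Nat.find_spec (hex n)
  have hg_le : ∀ n, r (g n) ≤ (2 : ℝ) ^ n := by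
    intro n
    rcases Nat.eq_zero_or_pos (g n) with h0 | hpos
    · rw [h0, hr0]; exact h2n n
    · have hlt : g n - 1 < g n := Nat.sub_lt hpos one_pos
      have := Nat.find_min (hex n) (m := g n - 1) hlt
      push_neg at this
      calc r (g n) = r (g n - 1 + 1) := by congr 1; omega
      _ ≤ 2 ^ n := this
  set f : ℕ → ℝ≥0∞ := fun n => ENNReal.ofReal (((2 : ℝ) ^ n)⁻¹ * Real.log (1 / β ((2 : ℝ) ^ n)))
    with hf
  set L : ℕ → ℝ := fun m => Real.log (1 / β (r (m + 1))) with hL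
  have hLnonneg : ∀ m, 0 ≤ L m := by
    intro m
    apply Real.log_nonneg
    rw [le_div_iff₀ (hβpos _ (hr1 _))]
    linarith [hβhalf _ (hr1 (m+1))]
  -- fiberwise decomposition
  rw [← tsum_fiberwise f g]
  rw [← ENNReal.tsum_mul_left]
  apply ENNReal.tsum_le_tsum
  intro m
  -- bound the fiber sum
  by_cases hA : (g ⁻¹' {m}).Nonempty
  · obtain ⟨n₁, hn₁⟩ := hA
    -- least element of the fiber
    have hAex : ∃ n, g n = m := ⟨n₁, hn₁⟩
    set n₀ := Nat.find hAex with hn₀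
    have hn₀mem : g n₀ = m := Nat.find_spec hAex
    have hn₀min : ∀ n ∈ g ⁻¹' {m}, n₀ ≤ n := fun n hn => Nat.find_min' hAex hn
    -- pointwise bound on the fiber: f n ≤ 2⁻¹^n * ofReal (L m)
    have hpt : ∀ n : ℕ, g n = m → f n ≤ (2 : ℝ≥0∞)⁻¹ ^ n * ENNReal.ofReal (L m) := by
      intro n hnm
      have hβle : β (r (m + 1)) ≤ β ((2:ℝ)^n) := hβmono _ _ (h2n n) (hnm ▸ (hg_lt n).le)
      have hlog : Real.log (1 / β ((2:ℝ)^n)) ≤ L m := by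
        apply Real.log_le_log (one_div_pos.mpr (hβpos _ (h2n n)))
        apply one_div_le_one_div_of_le (hβpos _ (hr1 _)) hβle
      calc f n ≤ ENNReal.ofReal (((2 : ℝ) ^ n)⁻¹ * L m) := by
            apply ENNReal.ofReal_le_ofReal
            exact mul_le_mul_of_nonneg_left hlog (by positivity)
        _ = ENNReal.ofReal (((2 : ℝ) ^ n)⁻¹) * ENNReal.ofReal (L m) := by
            rw [ENNReal.ofReal_mul (by positivity)]
        _ = (2 : ℝ≥0∞)⁻¹ ^ n * ENNReal.ofReal (L m) := by
            rw [ofReal_inv_two_pow]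
    calc ∑' n : g ⁻¹' {m}, f n
        ≤ ∑' n : g ⁻¹' {m}, (2 : ℝ≥0∞)⁻¹ ^ (n : ℕ) * ENNReal.ofReal (L m) :=
          ENNReal.tsum_le_tsum fun n => hpt n n.2
      _ = (∑' n : g ⁻¹' {m}, (2 : ℝ≥0∞)⁻¹ ^ (n : ℕ)) * ENNReal.ofReal (L m) :=
          ENNReal.tsum_mul_right
      _ ≤ ((2 : ℝ≥0∞)⁻¹ ^ n₀ * 2) * ENNReal.ofReal (L m) := by
          gcongr
          exact le_trans (ENNReal.tsum_mono_subtype _ hn₀min) (geom_tail n₀)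
      _ ≤ (ENNReal.ofReal ((r m)⁻¹) * 2) * ENNReal.ofReal (L m) := by
          gcongr
          have h1 : (0:ℝ) < r m := lt_of_lt_of_le one_pos (hr1 m)
          have h2 : r m ≤ (2:ℝ)^n₀ := hn₀mem ▸ hg_le n₀
          have : ((2:ℝ)^n₀)⁻¹ ≤ (r m)⁻¹ := by
            exact inv_anti₀ h1 h2
          calc (2 : ℝ≥0∞)⁻¹ ^ n₀ = ENNReal.ofReal (((2:ℝ)^n₀)⁻¹) :=
                (ofReal_inv_two_pow n₀).symm
            _ ≤ ENNReal.ofReal ((r m)⁻¹) := ENNReal.ofReal_le_ofReal this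
      _ = 2 * ENNReal.ofReal ((r m)⁻¹ * L m) := by
          rw [ENNReal.ofReal_mul (inv_nonneg.mpr (by linarith [hr1 m]))]; ring
  · rw [Set.not_nonempty_iff_eq_empty] at hA
    rw [hA]
    simp
end
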